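/- arXiv:1704.03679 — 3 statements merged into one kernel-verified Lean document; each statement's English description precedes it below -/
import Mathlib

section
/- Let J be a bounded Jacobi operator on ℓ²(ℤ) with entries b_j (diagonal) and a_j > 0 (off-diagonal), and let (μ⁻, μ⁺) be a gap in its spectrum. Then μ⁺ − μ⁻ ≤ 2(ω_b + 2ω_a), where ω_c := sup_{i,j} (c_i − c_j) is the variation of a bounded real sequence c. -/
open Set
open scoped ENNReal NNReal ComplexConjugate InnerProductSpace Pointwise

set_option maxHeartbeats 1000000

noncomputable section

namespace Stmt4Aux

abbrev H : Type := lp (fun _ : ℤ => ℂ) 2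

lemma sumSq (x : H) : Summable (fun n : ℤ => ‖(x : ∀ _: ℤ, ℂ) n‖ ^ 2) := by
  have h := (memℓp_gen_iff (p := 2) (by norm_num) (f := (x : ∀ _: ℤ, ℂ))).1 (lp.memℓp x)
  have h2 : ∀ n : ℤ, ‖(x : ∀ _: ℤ, ℂ) n‖ ^ ((2:ℝ≥0∞)).toReal = ‖(x : ∀ _: ℤ, ℂ) n‖ ^ 2 := by
    intro n
    rw [ENNReal.toReal_ofNat]
    exact Real.rpow_two _
  simpa [h2] using h

lemma sumSq_shift (x : H) (k : ℤ) : Summable (fun n : ℤ => ‖(x : ∀ _: ℤ, ℂ) (n + k)‖ ^ 2) :=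
  ((Equiv.addRight k).summable_iff (f := fun n : ℤ => ‖(x : ∀ _: ℤ, ℂ) n‖ ^ 2)).2 (sumSq x)

/-- summability of weighted products of (shifted) coordinates -/
lemma summable_prod (x y : H) (k l : ℤ) (c : ℤ → ℂ) (C : ℝ) (hC : ∀ n, ‖c n‖ ≤ C) :
    Summable (fun n : ℤ => c n * conj ((x : ∀ _: ℤ, ℂ) (n + k)) * (y : ∀ _: ℤ, ℂ) (n + l)) := by
  have hC0 : 0 ≤ C := le_trans (norm_nonneg _) (hC 0)
  apply Summable.of_norm
  have hb : ∀ n : ℤ, ‖c n * conj ((x : ∀ _: ℤ, ℂ) (n + k)) * (y : ∀ _: ℤ, ℂ) (n + l)‖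
      ≤ C * ((‖(x : ∀ _: ℤ, ℂ) (n + k)‖ ^ 2 + ‖(y : ∀ _: ℤ, ℂ) (n + l)‖ ^ 2) / 2) := by
    intro n
    have h1 : ‖c n * conj ((x : ∀ _: ℤ, ℂ) (n + k)) * (y : ∀ _: ℤ, ℂ) (n + l)‖
        = ‖c n‖ * ‖(x : ∀ _: ℤ, ℂ) (n + k)‖ * ‖(y : ∀ _: ℤ, ℂ) (n + l)‖ := by
      simp [norm_mul]
    rw [h1]
    have h2 : ‖(x : ∀ _: ℤ, ℂ) (n + k)‖ * ‖(y : ∀ _: ℤ, ℂ) (n + l)‖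
        ≤ (‖(x : ∀ _: ℤ, ℂ) (n + k)‖ ^ 2 + ‖(y : ∀ _: ℤ, ℂ) (n + l)‖ ^ 2) / 2 := by
      nlinarith [sq_nonneg (‖(x : ∀ _: ℤ, ℂ) (n + k)‖ - ‖(y : ∀ _: ℤ, ℂ) (n + l)‖)]
    calc ‖c n‖ * ‖(x : ∀ _: ℤ, ℂ) (n + k)‖ * ‖(y : ∀ _: ℤ, ℂ) (n + l)‖
        ≤ C * (‖(x : ∀ _: ℤ, ℂ) (n + k)‖ * ‖(y : ∀ _: ℤ, ℂ) (n + l)‖) := by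
          rw [mul_assoc]
          exact mul_le_mul_of_nonneg_right (hC n) (by positivity)
      _ ≤ C * _ := mul_le_mul_of_nonneg_left h2 hC0
  refine Summable.of_nonneg_of_le (fun n => norm_nonneg _) hb ?_
  exact (((sumSq_shift x k).add (sumSq_shift y l)).div_const 2).mul_left C

end Stmt4Aux

namespace Stmt4Aux

lemma jacobi_sa (a b : ℤ → ℝ) (Ca Cb : ℝ) (ha : ∀ j, |a j| ≤ Ca) (hb : ∀ j, |b j| ≤ Cb)
    (J : H →L[ℂ] H)
    (hJ : ∀ (y : H) (n : ℤ),
      (J y : ∀ _ : ℤ, ℂ) n = (a (n - 1) : ℂ) * (y : ∀ _ : ℤ, ℂ) (n - 1)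
        + (b n : ℂ) * (y : ∀ _ : ℤ, ℂ) n + (a n : ℂ) * (y : ∀ _ : ℤ, ℂ) (n + 1)) :
    IsSelfAdjoint J := by
  rw [ContinuousLinearMap.isSelfAdjoint_iff_isSymmetric]
  intro x y
  show ⟪J x, y⟫_ℂ = ⟪x, J y⟫_ℂ
  have hca : ∀ n : ℤ, ‖((a n : ℂ))‖ ≤ Ca := by
    intro n; rw [Complex.norm_real, Real.norm_eq_abs]; exact ha n
  have hcb : ∀ n : ℤ, ‖((b n : ℂ))‖ ≤ Cb := by
    intro n; rw [Complex.norm_real, Real.norm_eq_abs]; exact hb n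
  set X : ℤ → ℂ := (x : ∀ _ : ℤ, ℂ) with hX
  set Y : ℤ → ℂ := (y : ∀ _ : ℤ, ℂ) with hY
  set f1 : ℤ → ℂ := fun n => (a (n-1) : ℂ) * conj (X (n-1)) * Y n with hf1
  set f2 : ℤ → ℂ := fun n => (b n : ℂ) * conj (X n) * Y n with hf2
  set f3 : ℤ → ℂ := fun n => (a n : ℂ) * conj (X (n+1)) * Y n with hf3
  set g1 : ℤ → ℂ := fun n => (a (n-1) : ℂ) * conj (X n) * Y (n-1) with hg1
  set g3 : ℤ → ℂ := fun n => (a n : ℂ) * conj (X n) * Y (n+1) with hg3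
  have S1 : Summable f1 := by
    have := summable_prod x y (-1) 0 (fun n => ((a (n-1) : ℂ))) Ca (fun n => hca _)
    simpa [hf1, hX, hY, sub_eq_add_neg] using this
  have S2 : Summable f2 := by
    have := summable_prod x y 0 0 (fun n => ((b n : ℂ))) Cb (fun n => hcb _)
    simpa using this
  have S3 : Summable f3 := by
    have := summable_prod x y 1 0 (fun n => ((a n : ℂ))) Ca (fun n => hca _)
    simpa using this
  have T1 : Summable g1 := by
    have := summable_prod x y 0 (-1) (fun n => ((a (n-1) : ℂ))) Ca (fun n => hca _)
    simpa [hg1, hX, hY, sub_eq_add_neg] using this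
  have T3 : Summable g3 := by
    have := summable_prod x y 0 1 (fun n => ((a n : ℂ))) Ca (fun n => hca _)
    simpa using this
  have LHS : ⟪J x, y⟫_ℂ = (∑' n, f1 n) + (∑' n, f2 n) + (∑' n, f3 n) := by
    rw [lp.inner_eq_tsum]
    have key : ∀ n : ℤ, ⟪(J x : ∀ _ : ℤ, ℂ) n, Y n⟫_ℂ = f1 n + f2 n + f3 n := by
      intro n
      rw [RCLike.inner_apply, hJ x n]
      simp only [hf1, hf2, hf3, map_add, map_mul, Complex.conj_ofReal, hX]
      ring
    rw [tsum_congr key, Summable.tsum_add (S1.add S2) S3, Summable.tsum_add S1 S2]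
  have RHS : ⟪x, J y⟫_ℂ = (∑' n, g1 n) + (∑' n, f2 n) + (∑' n, g3 n) := by
    rw [lp.inner_eq_tsum]
    have key : ∀ n : ℤ, ⟪X n, (J y : ∀ _ : ℤ, ℂ) n⟫_ℂ = g1 n + f2 n + g3 n := by
      intro n
      rw [RCLike.inner_apply, hJ y n]
      simp only [hg1, hf2, hg3, hY]
      ring
    rw [tsum_congr key, Summable.tsum_add (T1.add S2) T3, Summable.tsum_add T1 S2]
  have E13 : (∑' n, f1 n) = ∑' n, g3 n := by
    have h := (Equiv.subRight (1:ℤ)).tsum_eq g3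
    rw [← h]
    refine tsum_congr fun n => ?_
    simp [hg3, hf1, sub_add_cancel]
  have E31 : (∑' n, f3 n) = ∑' n, g1 n := by
    have h := (Equiv.addRight (1:ℤ)).tsum_eq g1
    rw [← h]
    refine tsum_congr fun n => ?_
    simp [hg1, hf3, add_sub_cancel_right]
  rw [LHS, RHS, E13, E31]
  ring

lemma resolvent_bound (J : H →L[ℂ] H) (hsa : IsSelfAdjoint J) (μ δ : ℝ) (hδ : 0 < δ)
    (hμ : (μ:ℂ) ∉ spectrum ℂ J)
    (hsep : ∀ z ∈ spectrum ℂ J, δ ≤ ‖z - (μ:ℂ)‖) :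
    ∀ x : H, δ * ‖x‖ ≤ ‖(algebraMap ℂ (H →L[ℂ] H) μ - J) x‖ := by
  set A : H →L[ℂ] H := algebraMap ℂ (H →L[ℂ] H) μ - J with hA
  have hAsa : IsSelfAdjoint A := by
    refine (IsSelfAdjoint.algebraMap _ ?_).sub hsa
    simp [IsSelfAdjoint, Complex.star_def, Complex.conj_ofReal]
  obtain ⟨u, hu⟩ : IsUnit A := spectrum.notMem_iff.mp hμ
  set R : H →L[ℂ] H := ((u⁻¹ : (H →L[ℂ] H)ˣ) : H →L[ℂ] H) with hR
  have hAR : A * R = 1 := by rw [← hu]; exact u.mul_inv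
  have hRA : R * A = 1 := by rw [← hu]; exact u.inv_mul
  have hRsa : IsSelfAdjoint R := by
    have h2 : star R * A = 1 := by
      have h := congrArg star hAR
      rwa [star_mul, star_one, hAsa.star_eq] at h
    show star R = R
    calc star R = star R * (A * R) := by rw [hAR, mul_one]
      _ = (star R * A) * R := by rw [mul_assoc]
      _ = R := by rw [h2, one_mul]
  have hzbound : ∀ z ∈ spectrum ℂ R, ‖z‖ ≤ δ⁻¹ := by
    intro z hz
    have hz0 : z ≠ 0 := by
      intro h0
      exact spectrum.zero_notMem ℂ (u⁻¹).isUnit (h0 ▸ hz)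
    have hmem : ((Units.mk0 z hz0 : ℂˣ)⁻¹ : ℂ) ∈ spectrum ℂ ((u⁻¹)⁻¹ : (H →L[ℂ] H)ˣ).val := by
      exact (spectrum.inv_mem_iff (r := Units.mk0 z hz0) (a := u⁻¹)).mp hz
    rw [inv_inv, hu] at hmem
    have hmem2 : z⁻¹ ∈ ({(μ:ℂ)} : Set ℂ) - spectrum ℂ J := by
      rw [spectrum.singleton_sub_eq]
      simpa using hmem
    obtain ⟨p, hp, w, hw, hpw⟩ := hmem2
    rw [mem_singleton_iff] at hp
    subst hp
    have h1 : δ ≤ ‖z⁻¹‖ := by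
      rw [← hpw, ← norm_sub_rev]; exact hsep w hw
    rw [norm_inv] at h1
    have h0 : 0 < ‖z‖ := norm_pos_iff.mpr hz0
    calc ‖z‖ = (‖z‖⁻¹)⁻¹ := (inv_inv _).symm
      _ ≤ δ⁻¹ := by gcongr
  have hRnorm : ‖R‖ ≤ δ⁻¹ := by
    have hrad : spectralRadius ℂ R ≤ ((δ⁻¹).toNNReal : ℝ≥0∞) := by
      apply iSup₂_le
      intro z hz
      exact_mod_cast ENNReal.coe_le_coe.mpr
        (by rw [← norm_toNNReal]; exact Real.toNNReal_mono (hzbound z hz))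
    rw [hRsa.spectralRadius_eq_nnnorm] at hrad
    have := ENNReal.coe_le_coe.mp hrad
    calc ‖R‖ = (‖R‖₊ : ℝ) := rfl
      _ ≤ ((δ⁻¹).toNNReal : ℝ) := by exact_mod_cast this
      _ = δ⁻¹ := Real.coe_toNNReal _ (by positivity)
  intro x
  have h1 : ‖x‖ ≤ δ⁻¹ * ‖A x‖ := by
    calc ‖x‖ = ‖(R * A) x‖ := by rw [hRA]; simp
      _ = ‖R (A x)‖ := rfl
      _ ≤ ‖R‖ * ‖A x‖ := R.le_opNorm _
      _ ≤ δ⁻¹ * ‖A x‖ := mul_le_mul_of_nonneg_right hRnorm (norm_nonneg _)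
  have := mul_le_mul_of_nonneg_left h1 hδ.le
  rw [← mul_assoc, mul_inv_cancel₀ hδ.ne', one_mul] at this
  exact this

lemma lp_norm_sq (x : H) : ‖x‖ ^ 2 = ∑' n : ℤ, ‖(x : ∀ _: ℤ, ℂ) n‖ ^ 2 := by
  have h := lp.norm_rpow_eq_tsum (p := 2) (by norm_num) x
  rw [ENNReal.toReal_ofNat] at h
  rw [← Real.rpow_two, h]
  exact tsum_congr fun n => Real.rpow_two _

lemma exists_lp (f : ℤ → ℂ) (g : ℤ → ℝ) (hg : Summable g) (hfg : ∀ n, ‖f n‖ ^ 2 ≤ g n) :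
    ∃ F : H, (F : ∀ _: ℤ, ℂ) = f ∧ ‖F‖ ^ 2 ≤ ∑' n, g n := by
  have hsq : Summable (fun n => ‖f n‖ ^ 2) :=
    Summable.of_nonneg_of_le (fun n => by positivity) hfg hg
  have hmem : Memℓp f 2 := by
    apply memℓp_gen
    have h2 : (fun n : ℤ => ‖f n‖ ^ ((2:ℝ≥0∞)).toReal) = fun n => ‖f n‖ ^ 2 := by
      funext n; rw [ENNReal.toReal_ofNat]; exact Real.rpow_two _
    rw [h2]; exact hsq
  refine ⟨⟨f, hmem⟩, rfl, ?_⟩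
  rw [lp_norm_sq]
  exact Summable.tsum_le_tsum hfg hsq hg

lemma norm_le_of_sq_le {r c : ℝ} (hc : 0 ≤ c) (hr : 0 ≤ r) (h : r ^ 2 ≤ c ^ 2) : r ≤ c := by
  nlinarith

lemma spectrum_enclosure (a b : ℤ → ℝ) (J : H →L[ℂ] H)
    (hJ : ∀ (y : H) (n : ℤ),
      (J y : ∀ _ : ℤ, ℂ) n = (a (n - 1) : ℂ) * (y : ∀ _ : ℤ, ℂ) (n - 1)
        + (b n : ℂ) * (y : ∀ _ : ℤ, ℂ) n + (a n : ℂ) * (y : ∀ _ : ℤ, ℂ) (n + 1))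
    (c Aa Bb : ℝ) (hA : ∀ n, |a n| ≤ Aa) (hB : ∀ n, |b n - c| ≤ Bb) :
    ∀ z ∈ spectrum ℂ J, ‖z - (c:ℂ)‖ ≤ 2 * Aa + Bb := by
  have hAa0 : 0 ≤ Aa := le_trans (abs_nonneg _) (hA 0)
  have hBb0 : 0 ≤ Bb := le_trans (abs_nonneg _) (hB 0)
  have step1 : ∀ x : H, ‖(J - algebraMap ℂ (H →L[ℂ] H) c) x‖ ≤ (2 * Aa + Bb) * ‖x‖ := by
    intro x
    set X : ℤ → ℂ := (x : ∀ _ : ℤ, ℂ) with hX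
    obtain ⟨F1, hF1, hN1⟩ := exists_lp (fun n => (a (n-1) : ℂ) * X (n-1))
      (fun n => Aa ^ 2 * ‖X (n + (-1))‖ ^ 2) ((sumSq_shift x (-1)).mul_left _)
      (by
        intro n
        show ‖(a (n-1) : ℂ) * X (n-1)‖ ^ 2 ≤ Aa ^ 2 * ‖X (n + (-1))‖ ^ 2
        have h1 : ‖(a (n-1) : ℂ) * X (n-1)‖ = |a (n-1)| * ‖X (n-1)‖ := by
          rw [norm_mul, Complex.norm_real, Real.norm_eq_abs]
        rw [h1, mul_pow, show n + (-1 : ℤ) = n - 1 by ring]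
        have h2 : |a (n-1)| ^ 2 ≤ Aa ^ 2 := pow_le_pow_left₀ (abs_nonneg _) (hA (n-1)) 2
        exact mul_le_mul_of_nonneg_right h2 (by positivity))
    obtain ⟨F2, hF2, hN2⟩ := exists_lp (fun n => ((b n - c : ℝ) : ℂ) * X n)
      (fun n => Bb ^ 2 * ‖X n‖ ^ 2) ((sumSq x).mul_left _)
      (by
        intro n
        show ‖((b n - c : ℝ) : ℂ) * X n‖ ^ 2 ≤ Bb ^ 2 * ‖X n‖ ^ 2
        have h1 : ‖((b n - c : ℝ) : ℂ) * X n‖ = |b n - c| * ‖X n‖ := by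
          rw [norm_mul, Complex.norm_real, Real.norm_eq_abs]
        rw [h1, mul_pow]
        have h2 : |b n - c| ^ 2 ≤ Bb ^ 2 := pow_le_pow_left₀ (abs_nonneg _) (hB n) 2
        exact mul_le_mul_of_nonneg_right h2 (by positivity))
    obtain ⟨F3, hF3, hN3⟩ := exists_lp (fun n => (a n : ℂ) * X (n+1))
      (fun n => Aa ^ 2 * ‖X (n + 1)‖ ^ 2) ((sumSq_shift x 1).mul_left _)
      (by
        intro n
        show ‖(a n : ℂ) * X (n+1)‖ ^ 2 ≤ Aa ^ 2 * ‖X (n + 1)‖ ^ 2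
        have h1 : ‖(a n : ℂ) * X (n+1)‖ = |a n| * ‖X (n+1)‖ := by
          rw [norm_mul, Complex.norm_real, Real.norm_eq_abs]
        rw [h1, mul_pow]
        have h2 : |a n| ^ 2 ≤ Aa ^ 2 := pow_le_pow_left₀ (abs_nonneg _) (hA n) 2
        exact mul_le_mul_of_nonneg_right h2 (by positivity))
    have hsplit : (J - algebraMap ℂ (H →L[ℂ] H) c) x = F1 + F2 + F3 := by
      apply lp.ext
      funext n
      have hc : (algebraMap ℂ (H →L[ℂ] H) c) x = (c : ℂ) • x := by
        rw [Algebra.algebraMap_eq_smul_one]; rfl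
      have : ((J - algebraMap ℂ (H →L[ℂ] H) c) x : ∀ _ : ℤ, ℂ) n
          = (J x : ∀ _ : ℤ, ℂ) n - (c : ℂ) * X n := by
        rw [ContinuousLinearMap.sub_apply, hc, lp.coeFn_sub, Pi.sub_apply, lp.coeFn_smul,
          Pi.smul_apply, smul_eq_mul]
      rw [lp.coeFn_add, lp.coeFn_add, Pi.add_apply, Pi.add_apply, hF1, hF2, hF3, this, hJ x n]
      push_cast
      ring
    have hn1 : ‖F1‖ ≤ Aa * ‖x‖ := by
      apply norm_le_of_sq_le (by positivity) (norm_nonneg _)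
      rw [mul_pow]
      calc ‖F1‖ ^ 2 ≤ ∑' n, Aa ^ 2 * ‖X (n + (-1))‖ ^ 2 := hN1
        _ = Aa ^ 2 * ∑' n, ‖X (n + (-1))‖ ^ 2 := (tsum_mul_left)
        _ = Aa ^ 2 * ‖x‖ ^ 2 := by
            rw [lp_norm_sq x]
            congr 1
            exact (Equiv.addRight (-1 : ℤ)).tsum_eq (fun n => ‖X n‖ ^ 2)
    have hn2 : ‖F2‖ ≤ Bb * ‖x‖ := by
      apply norm_le_of_sq_le (by positivity) (norm_nonneg _)
      rw [mul_pow]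
      calc ‖F2‖ ^ 2 ≤ ∑' n, Bb ^ 2 * ‖X n‖ ^ 2 := hN2
        _ = Bb ^ 2 * ∑' n, ‖X n‖ ^ 2 := (tsum_mul_left)
        _ = Bb ^ 2 * ‖x‖ ^ 2 := by rw [lp_norm_sq x]
    have hn3 : ‖F3‖ ≤ Aa * ‖x‖ := by
      apply norm_le_of_sq_le (by positivity) (norm_nonneg _)
      rw [mul_pow]
      calc ‖F3‖ ^ 2 ≤ ∑' n, Aa ^ 2 * ‖X (n + 1)‖ ^ 2 := hN3
        _ = Aa ^ 2 * ∑' n, ‖X (n + 1)‖ ^ 2 := (tsum_mul_left)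
        _ = Aa ^ 2 * ‖x‖ ^ 2 := by
            rw [lp_norm_sq x]
            congr 1
            exact (Equiv.addRight (1 : ℤ)).tsum_eq (fun n => ‖X n‖ ^ 2)
    calc ‖(J - algebraMap ℂ (H →L[ℂ] H) c) x‖ = ‖F1 + F2 + F3‖ := by rw [hsplit]
      _ ≤ ‖F1‖ + ‖F2‖ + ‖F3‖ := norm_add₃_le
      _ ≤ Aa * ‖x‖ + Bb * ‖x‖ + Aa * ‖x‖ := by gcongr
      _ = (2 * Aa + Bb) * ‖x‖ := by ring
  have hnorm : ‖J - algebraMap ℂ (H →L[ℂ] H) c‖ ≤ 2 * Aa + Bb :=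
    ContinuousLinearMap.opNorm_le_bound _ (by positivity) step1
  haveI : Nontrivial H := by
    refine ⟨lp.single 2 (0 : ℤ) (1 : ℂ), 0, fun h => ?_⟩
    have h0 : (lp.single 2 (0 : ℤ) (1 : ℂ) : ∀ _ : ℤ, ℂ) 0 = 1 :=
      lp.single_apply_self (E := fun _ : ℤ => ℂ) 2 (0 : ℤ) (1 : ℂ)
    rw [h] at h0
    rw [lp.coeFn_zero] at h0
    simp at h0
  intro z hz
  have hmem : z - (c : ℂ) ∈ spectrum ℂ (J - algebraMap ℂ (H →L[ℂ] H) c) := by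
    rw [← spectrum.sub_singleton_eq]
    exact Set.sub_mem_sub hz rfl
  exact le_trans (spectrum.norm_le_norm_of_mem hmem) hnorm

lemma test_vector (a b : ℤ → ℝ) (J : H →L[ℂ] H)
    (hJ : ∀ (y : H) (n : ℤ),
      (J y : ∀ _ : ℤ, ℂ) n = (a (n - 1) : ℂ) * (y : ∀ _ : ℤ, ℂ) (n - 1)
        + (b n : ℂ) * (y : ∀ _ : ℤ, ℂ) n + (a n : ℂ) * (y : ∀ _ : ℤ, ℂ) (n + 1))
    (c abar ρa ρb t K : ℝ) (habar : 0 < abar)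
    (hρa : ∀ n, |a n - abar| ≤ ρa) (hρb : ∀ n, |b n - c| ≤ ρb)
    (ht : |t - c| ≤ 2 * abar)
    (hK : ∀ n, |a (n-1)| + |b n - t| + |a n| ≤ K) (N : ℕ) :
    ∃ x : H, ‖x‖ ^ 2 = (2 * N + 1 : ℝ) ∧
      ‖(algebraMap ℂ (H →L[ℂ] H) t - J) x‖ ^ 2 ≤ (2 * N + 1 : ℝ) * (2 * ρa + ρb) ^ 2 + 4 * K ^ 2 := by
  have hρa0 : 0 ≤ ρa := le_trans (abs_nonneg _) (hρa 0)
  have hρb0 : 0 ≤ ρb := le_trans (abs_nonneg _) (hρb 0)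
  have hK0 : 0 ≤ K := le_trans (by positivity) (hK 0)
  -- angle
  set θ : ℝ := Real.arccos ((t - c) / (2 * abar)) with hθ
  have harg : -1 ≤ (t - c) / (2 * abar) ∧ (t - c) / (2 * abar) ≤ 1 := by
    rw [abs_le] at ht
    constructor
    · rw [le_div_iff₀ (by positivity)]; linarith [ht.1]
    · rw [div_le_one (by positivity)]; linarith [ht.2]
  have hcos : Real.cos θ = (t - c) / (2 * abar) := Real.cos_arccos harg.1 harg.2
  have htc : t = c + 2 * abar * Real.cos θ := by
    rw [hcos]; field_simp; ring
  -- the exponential sequence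
  set E : ℤ → ℂ := fun m => Complex.exp ((((m : ℝ) * θ : ℝ) : ℂ) * Complex.I) with hE
  have hEabs : ∀ m : ℤ, ‖E m‖ = 1 := by
    intro m
    simp only [hE]
    exact Complex.norm_exp_ofReal_mul_I _
  have hEp : ∀ m : ℤ, E (m + 1) = E m * Complex.exp ((θ : ℂ) * Complex.I) := by
    intro m
    simp only [hE]
    rw [← Complex.exp_add]
    congr 1
    push_cast
    ring
  have hEm : ∀ m : ℤ, E (m - 1) = E m * Complex.exp (-(θ : ℂ) * Complex.I) := by
    intro m
    simp only [hE]
    rw [← Complex.exp_add]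
    congr 1
    push_cast
    ring
  have htC : (t : ℂ) = (c : ℂ)
      + (abar : ℂ) * (Complex.exp ((θ : ℂ) * Complex.I) + Complex.exp (-(θ : ℂ) * Complex.I)) := by
    have h2c := Complex.two_cos (x := (θ : ℂ))
    rw [htc]
    push_cast
    linear_combination (abar : ℂ) * h2c
  -- the test vector
  set f : ℤ → ℂ := fun n => if n ∈ Finset.Icc (-(N : ℤ)) N then E n else 0 with hf
  have hf_zero : ∀ n ∉ Finset.Icc (-(N : ℤ)) N, f n = 0 := by
    intro n hn; simp only [hf]; rw [if_neg hn]
  have hfabs : ∀ n, ‖f n‖ ≤ 1 := by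
    intro n
    simp only [hf]
    split_ifs with h
    · exact le_of_eq (hEabs n)
    · simp
  have hmem : Memℓp f 2 := by
    apply memℓp_gen
    apply summable_of_ne_finset_zero (s := Finset.Icc (-(N : ℤ)) N)
    intro n hn
    rw [hf_zero n hn]
    simp [Real.zero_rpow]
  set x : H := ⟨f, hmem⟩ with hx
  have hxcoe : (x : ∀ _ : ℤ, ℂ) = f := rfl
  refine ⟨x, ?_, ?_⟩
  · rw [lp_norm_sq, hxcoe]
    rw [tsum_eq_sum (s := Finset.Icc (-(N : ℤ)) N) (fun n hn => by rw [hf_zero n hn]; simp)]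
    have : ∀ n ∈ Finset.Icc (-(N : ℤ)) N, ‖f n‖ ^ 2 = 1 := by
      intro n hn
      simp only [hf]
      rw [if_pos hn, hEabs n]; norm_num
    rw [Finset.sum_congr rfl this, Finset.sum_const, Int.card_Icc]
    have hcard : ((N : ℤ) + 1 - -(N : ℤ)).toNat = 2 * N + 1 := by omega
    rw [hcard]
    push_cast
    ring
  · -- coordinates of (t - J) x
    set w : ℤ → ℂ := fun n => (t : ℂ) * f n - ((J x : ∀ _ : ℤ, ℂ) n) with hw
    have hwcoe : ((algebraMap ℂ (H →L[ℂ] H) t - J) x : ∀ _ : ℤ, ℂ) = w := by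
      funext n
      have hc : (algebraMap ℂ (H →L[ℂ] H) (t:ℂ)) x = (t : ℂ) • x := by
        rw [Algebra.algebraMap_eq_smul_one]; rfl
      rw [ContinuousLinearMap.sub_apply, hc, lp.coeFn_sub, Pi.sub_apply, lp.coeFn_smul,
        Pi.smul_apply, smul_eq_mul, hw, hxcoe]
    have hwval : ∀ n : ℤ, w n = (t : ℂ) * f n
        - ((a (n-1) : ℂ) * f (n-1) + (b n : ℂ) * f n + (a n : ℂ) * f (n+1)) := by
      intro n
      simp only [hw]
      rw [hJ x n, hxcoe]
    -- general bound
    have hgen : ∀ n : ℤ, ‖w n‖ ≤ K := by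
      intro n
      rw [hwval n]
      have : (t : ℂ) * f n - ((a (n-1) : ℂ) * f (n-1) + (b n : ℂ) * f n + (a n : ℂ) * f (n+1))
          = -((a (n-1) : ℂ) * f (n-1)) + ((t - b n : ℝ) : ℂ) * f n + -((a n : ℂ) * f (n+1)) := by
        push_cast; ring
      rw [this]
      refine le_trans (norm_add₃_le) ?_
      have e1 : ‖-((a (n-1) : ℂ) * f (n-1))‖ ≤ |a (n-1)| := by
        rw [norm_neg, norm_mul, Complex.norm_real, Real.norm_eq_abs]
        calc |a (n-1)| * ‖f (n-1)‖ ≤ |a (n-1)| * 1 :=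
          mul_le_mul_of_nonneg_left (hfabs _) (abs_nonneg _)
        _ = |a (n-1)| := mul_one _
      have e2 : ‖((t - b n : ℝ) : ℂ) * f n‖ ≤ |b n - t| := by
        rw [norm_mul, Complex.norm_real, Real.norm_eq_abs, abs_sub_comm]
        calc |b n - t| * ‖f n‖ ≤ |b n - t| * 1 :=
          mul_le_mul_of_nonneg_left (hfabs _) (abs_nonneg _)
        _ = _ := mul_one _
      have e3 : ‖-((a n : ℂ) * f (n+1))‖ ≤ |a n| := by
        rw [norm_neg, norm_mul, Complex.norm_real, Real.norm_eq_abs]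
        calc |a n| * ‖f (n+1)‖ ≤ |a n| * 1 :=
          mul_le_mul_of_nonneg_left (hfabs _) (abs_nonneg _)
        _ = |a n| := mul_one _
      calc _ ≤ |a (n-1)| + |b n - t| + |a n| := by gcongr
        _ ≤ K := hK n
    -- middle bound
    have hmid : ∀ n : ℤ, n ∈ Finset.Icc (-(N:ℤ) + 1) ((N:ℤ) - 1) → ‖w n‖ ≤ 2 * ρa + ρb := by
      intro n hn
      rw [Finset.mem_Icc] at hn
      have hn1 : n - 1 ∈ Finset.Icc (-(N : ℤ)) N := by rw [Finset.mem_Icc]; omega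
      have hn2 : n ∈ Finset.Icc (-(N : ℤ)) N := by rw [Finset.mem_Icc]; omega
      have hn3 : n + 1 ∈ Finset.Icc (-(N : ℤ)) N := by rw [Finset.mem_Icc]; omega
      have hfn1 : f (n-1) = E (n-1) := by simp only [hf]; rw [if_pos hn1]
      have hfn2 : f n = E n := by simp only [hf]; rw [if_pos hn2]
      have hfn3 : f (n+1) = E (n+1) := by simp only [hf]; rw [if_pos hn3]
      have key : w n = -(((a (n-1) - abar : ℝ)) : ℂ) * E (n-1) - (((b n - c : ℝ)) : ℂ) * E n
          - (((a n - abar : ℝ)) : ℂ) * E (n+1) := by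
        rw [hwval n, hfn1, hfn2, hfn3, hEp n, hEm n, htC]
        push_cast
        ring
      rw [key]
      have e1 : ‖-(((a (n-1) - abar : ℝ)) : ℂ) * E (n-1)‖ ≤ ρa := by
        rw [norm_mul, norm_neg, Complex.norm_real, Real.norm_eq_abs, hEabs, mul_one]
        exact hρa _
      have e2 : ‖(((b n - c : ℝ)) : ℂ) * E n‖ ≤ ρb := by
        rw [norm_mul, Complex.norm_real, Real.norm_eq_abs, hEabs, mul_one]
        exact hρb _
      have e3 : ‖(((a n - abar : ℝ)) : ℂ) * E (n+1)‖ ≤ ρa := by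
        rw [norm_mul, Complex.norm_real, Real.norm_eq_abs, hEabs, mul_one]
        exact hρa _
      calc ‖_ - _ - _‖ ≤ ‖-(((a (n-1) - abar : ℝ)) : ℂ) * E (n-1) - (((b n - c : ℝ)) : ℂ) * E n‖
            + ‖(((a n - abar : ℝ)) : ℂ) * E (n+1)‖ := norm_sub_le _ _
        _ ≤ (‖-(((a (n-1) - abar : ℝ)) : ℂ) * E (n-1)‖ + ‖(((b n - c : ℝ)) : ℂ) * E n‖)
            + ‖(((a n - abar : ℝ)) : ℂ) * E (n+1)‖ := by gcongr; exact norm_sub_le _ _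
        _ ≤ (ρa + ρb) + ρa := by gcongr
        _ = 2 * ρa + ρb := by ring
    -- support of w
    have hwsupp : ∀ n ∉ Finset.Icc (-(N:ℤ) - 1) ((N:ℤ) + 1), w n = 0 := by
      intro n hn
      rw [Finset.mem_Icc] at hn
      have h1 : f (n-1) = 0 := hf_zero _ (by rw [Finset.mem_Icc]; omega)
      have h2 : f n = 0 := hf_zero _ (by rw [Finset.mem_Icc]; omega)
      have h3 : f (n+1) = 0 := hf_zero _ (by rw [Finset.mem_Icc]; omega)
      rw [hwval n, h1, h2, h3]
      ring
    -- summing up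
    have hsum : ‖(algebraMap ℂ (H →L[ℂ] H) t - J) x‖ ^ 2
        = ∑ n ∈ Finset.Icc (-(N:ℤ) - 1) ((N:ℤ) + 1), ‖w n‖ ^ 2 := by
      rw [lp_norm_sq, hwcoe]
      exact tsum_eq_sum (fun n hn => by rw [hwsupp n hn]; simp)
    rw [hsum]
    set s : Finset ℤ := Finset.Icc (-(N:ℤ) - 1) ((N:ℤ) + 1) with hs
    set mid : Finset ℤ := Finset.Icc (-(N:ℤ) + 1) ((N:ℤ) - 1) with hmids
    have hsub : mid ⊆ s := by
      intro n hn
      rw [hmids, Finset.mem_Icc] at hn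
      rw [hs, Finset.mem_Icc]
      omega
    have hsplit : ∑ n ∈ s, ‖w n‖ ^ 2 = ∑ n ∈ s \ mid, ‖w n‖ ^ 2 + ∑ n ∈ mid, ‖w n‖ ^ 2 :=
      (Finset.sum_sdiff hsub).symm
    have hmidsum : ∑ n ∈ mid, ‖w n‖ ^ 2 ≤ (2 * N + 1 : ℝ) * (2 * ρa + ρb) ^ 2 := by
      have h1 : ∑ n ∈ mid, ‖w n‖ ^ 2 ≤ mid.card • ((2 * ρa + ρb) ^ 2) := by
        apply Finset.sum_le_card_nsmul
        intro n hn
        exact pow_le_pow_left₀ (norm_nonneg _) (hmid n hn) 2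
      rw [nsmul_eq_mul] at h1
      refine le_trans h1 ?_
      apply mul_le_mul_of_nonneg_right _ (by positivity)
      rw [hmids, Int.card_Icc]
      have : (((N:ℤ) - 1 + 1 - (-(N:ℤ) + 1)).toNat : ℝ) ≤ (2 * N + 1 : ℝ) := by
        have : ((N:ℤ) - 1 + 1 - (-(N:ℤ) + 1)).toNat ≤ 2 * N + 1 := by omega
        exact_mod_cast this
      exact this
    have hbdsum : ∑ n ∈ s \ mid, ‖w n‖ ^ 2 ≤ 4 * K ^ 2 := by
      have h1 : ∑ n ∈ s \ mid, ‖w n‖ ^ 2 ≤ (s \ mid).card • (K ^ 2) := by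
        apply Finset.sum_le_card_nsmul
        intro n hn
        exact pow_le_pow_left₀ (norm_nonneg _) (hgen n) 2
      rw [nsmul_eq_mul] at h1
      refine le_trans h1 ?_
      apply mul_le_mul_of_nonneg_right _ (by positivity)
      have hc : (s \ mid).card = s.card - mid.card := Finset.card_sdiff_of_subset hsub
      rw [hc, hs, hmids, Int.card_Icc, Int.card_Icc]
      have : ((N:ℤ) + 1 + 1 - (-(N:ℤ) - 1)).toNat - ((N:ℤ) - 1 + 1 - (-(N:ℤ) + 1)).toNat ≤ 4 := by
        omega
      calc ((((N:ℤ) + 1 + 1 - (-(N:ℤ) - 1)).toNat - ((N:ℤ) - 1 + 1 - (-(N:ℤ) + 1)).toNat : ℕ) : ℝ)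
          ≤ ((4 : ℕ) : ℝ) := by exact_mod_cast this
        _ = 4 := by norm_num
    rw [hsplit]
    linarith

lemma arith_contra (δ ρ K n : ℝ) (hδ : 0 < δ) (hρ : 0 ≤ ρ) (hρδ : ρ < δ) (hn : 0 ≤ n)
    (h7 : δ ^ 2 * (2 * n + 1) ≤ (2 * n + 1) * ρ ^ 2 + 4 * K ^ 2)
    (h4 : 4 * K ^ 2 < n * (δ ^ 2 - ρ ^ 2)) : False := by
  have hD : 0 < δ ^ 2 - ρ ^ 2 := by nlinarith
  nlinarith [mul_pos (show (0:ℝ) < n + 1 by linarith) hD]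

end Stmt4Aux

end

open Stmt4Aux in
/-- For a bounded Jacobi operator `J` on `ℓ²(ℤ)`, the length of any gap
`(μ⁻, μ⁺)` in its spectrum is at most `2(ω_b + 2 ω_a)`, where
`ω_c = sup_{i,j} (c i - c j)` is the variation of the sequence `c`. -/
theorem stmt4 (a b : ℤ → ℝ)
    (ha_pos : ∀ j, 0 < a j)
    (ha_bdd : ∃ C, ∀ j, |a j| ≤ C) (hb_bdd : ∃ C, ∀ j, |b j| ≤ C)
    (J : lp (fun _ : ℤ => ℂ) 2 →L[ℂ] lp (fun _ : ℤ => ℂ) 2)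
    (hJ : ∀ (y : lp (fun _ : ℤ => ℂ) 2) (n : ℤ),
      (J y : ∀ _ : ℤ, ℂ) n = (a (n - 1) : ℂ) * (y : ∀ _ : ℤ, ℂ) (n - 1)
        + (b n : ℂ) * (y : ∀ _ : ℤ, ℂ) n + (a n : ℂ) * (y : ∀ _ : ℤ, ℂ) (n + 1))
    (μm μp : ℝ)
    (hμm : (μm : ℂ) ∈ spectrum ℂ J) (hμp : (μp : ℂ) ∈ spectrum ℂ J)
    (hgap : ∀ z ∈ spectrum ℂ J, ∀ x : ℝ, z = (x : ℂ) → x ∉ Ioo μm μp) :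
    μp - μm ≤ 2 * ((⨆ q : ℤ × ℤ, (b q.1 - b q.2)) + 2 * ⨆ q : ℤ × ℤ, (a q.1 - a q.2)) := by
  obtain ⟨Ca, hCa⟩ := ha_bdd
  obtain ⟨Cb, hCb⟩ := hb_bdd
  have hCa0 : 0 ≤ Ca := le_trans (abs_nonneg _) (hCa 0)
  have hCb0 : 0 ≤ Cb := le_trans (abs_nonneg _) (hCb 0)
  -- variations
  set Ωb : ℝ := ⨆ q : ℤ × ℤ, (b q.1 - b q.2) with hΩb
  set Ωa : ℝ := ⨆ q : ℤ × ℤ, (a q.1 - a q.2) with hΩa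
  have hbddΩb : BddAbove (Set.range fun q : ℤ × ℤ => b q.1 - b q.2) := by
    refine ⟨2 * Cb, ?_⟩
    rintro _ ⟨q, rfl⟩
    have h1 := abs_le.mp (hCb q.1)
    have h2 := abs_le.mp (hCb q.2)
    simp only
    linarith [h1.2, h2.1]
  have hbddΩa : BddAbove (Set.range fun q : ℤ × ℤ => a q.1 - a q.2) := by
    refine ⟨2 * Ca, ?_⟩
    rintro _ ⟨q, rfl⟩
    have h1 := abs_le.mp (hCa q.1)
    have h2 := abs_le.mp (hCa q.2)
    simp only
    linarith [h1.2, h2.1]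
  have hpairb : ∀ i j : ℤ, b i - b j ≤ Ωb := fun i j => le_ciSup hbddΩb ((i, j) : ℤ × ℤ)
  have hpaira : ∀ i j : ℤ, a i - a j ≤ Ωa := fun i j => le_ciSup hbddΩa ((i, j) : ℤ × ℤ)
  have hΩb0 : 0 ≤ Ωb := by have := hpairb 0 0; linarith
  have hΩa0 : 0 ≤ Ωa := by have := hpaira 0 0; linarith
  -- sup and inf of the sequences
  set bS : ℝ := sSup (Set.range b) with hbS
  set bI : ℝ := sInf (Set.range b) with hbI
  set aS : ℝ := sSup (Set.range a) with haS
  set aI : ℝ := sInf (Set.range a) with haI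
  have hbddb : BddAbove (Set.range b) := ⟨Cb, by rintro _ ⟨i, rfl⟩; linarith [(abs_le.mp (hCb i)).2]⟩
  have hbddb' : BddBelow (Set.range b) := ⟨-Cb, by rintro _ ⟨i, rfl⟩; linarith [(abs_le.mp (hCb i)).1]⟩
  have hbdda : BddAbove (Set.range a) := ⟨Ca, by rintro _ ⟨i, rfl⟩; linarith [(abs_le.mp (hCa i)).2]⟩
  have hbdda' : BddBelow (Set.range a) := ⟨0, by rintro _ ⟨i, rfl⟩; exact (ha_pos i).le⟩
  have hbSle : ∀ n, b n ≤ bS := fun n => le_csSup hbddb (Set.mem_range_self n)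
  have hbIle : ∀ n, bI ≤ b n := fun n => csInf_le hbddb' (Set.mem_range_self n)
  have haSle : ∀ n, a n ≤ aS := fun n => le_csSup hbdda (Set.mem_range_self n)
  have haIle : ∀ n, aI ≤ a n := fun n => csInf_le hbdda' (Set.mem_range_self n)
  have haI0 : 0 ≤ aI := le_csInf (Set.range_nonempty a) (by rintro _ ⟨i, rfl⟩; exact (ha_pos i).le)
  have haS0 : 0 < aS := lt_of_lt_of_le (ha_pos 0) (haSle 0)
  have hvarb : bS - bI ≤ Ωb := by
    have h1 : ∀ i : ℤ, b i ≤ Ωb + bI := by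
      intro i
      have h2 : b i - Ωb ≤ bI :=
        le_csInf (Set.range_nonempty b) (by rintro _ ⟨j, rfl⟩; linarith [hpairb i j])
      linarith
    have h2 : bS ≤ Ωb + bI := csSup_le (Set.range_nonempty b) (by rintro _ ⟨i, rfl⟩; exact h1 i)
    linarith
  have hvara : aS - aI ≤ Ωa := by
    have h1 : ∀ i : ℤ, a i ≤ Ωa + aI := by
      intro i
      have h2 : a i - Ωa ≤ aI :=
        le_csInf (Set.range_nonempty a) (by rintro _ ⟨j, rfl⟩; linarith [hpaira i j])
      linarith
    have h2 : aS ≤ Ωa + aI := csSup_le (Set.range_nonempty a) (by rintro _ ⟨i, rfl⟩; exact h1 i)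
    linarith
  -- midpoints and radii
  set c : ℝ := (bS + bI) / 2 with hc
  set ρb : ℝ := (bS - bI) / 2 with hρbdef
  set abar : ℝ := (aS + aI) / 2 with habardef
  set ρa : ℝ := (aS - aI) / 2 with hρadef
  have hρb0 : 0 ≤ ρb := by rw [hρbdef]; linarith [hbSle 0, hbIle 0]
  have hρa0 : 0 ≤ ρa := by rw [hρadef]; linarith [haSle 0, haIle 0]
  have habar0 : 0 < abar := by rw [habardef]; linarith
  have hbdev : ∀ n, |b n - c| ≤ ρb := by
    intro n; rw [abs_le, hc, hρbdef]; constructor <;> [linarith [hbIle n]; linarith [hbSle n]]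
  have hadev : ∀ n, |a n - abar| ≤ ρa := by
    intro n
    rw [abs_le, habardef, hρadef]
    constructor <;> [linarith [haIle n]; linarith [haSle n]]
  set ρ : ℝ := 2 * ρa + ρb with hρdef
  have hρ0 : 0 ≤ ρ := by rw [hρdef]; linarith
  -- main objects
  have hsa : IsSelfAdjoint J := jacobi_sa a b Ca Cb hCa hCb J hJ
  have henc : ∀ z ∈ spectrum ℂ J, ‖z - (c : ℂ)‖ ≤ 2 * aS + ρb :=
    spectrum_enclosure a b J hJ c aS ρb
      (fun n => by rw [abs_of_pos (ha_pos n)]; exact haSle n) hbdev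
  by_cases hlt : μm < μp
  swap
  · push_neg at hlt
    linarith
  set δ : ℝ := (μp - μm) / 2 with hδdef
  set μs : ℝ := (μm + μp) / 2 with hμsdef
  have hδ0 : 0 < δ := by rw [hδdef]; linarith
  have hμmval : ‖(μm : ℂ) - (c : ℂ)‖ = |μm - c| := by
    rw [← Complex.ofReal_sub, Complex.norm_real, Real.norm_eq_abs]
  have hμpval : ‖(μp : ℂ) - (c : ℂ)‖ = |μp - c| := by
    rw [← Complex.ofReal_sub, Complex.norm_real, Real.norm_eq_abs]
  have hδρ : δ ≤ ρ := by
    rcases le_or_gt μs (c + 2 * abar) with hin1 | hout1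
    · rcases le_or_gt (c - 2 * abar) μs with hin2 | hout2
      · -- middle case
        have hμsIoo : μs ∈ Ioo μm μp := by
          rw [Set.mem_Ioo, hμsdef]; constructor <;> linarith
        have hμs_notin : (μs : ℂ) ∉ spectrum ℂ J := fun hmem => hgap _ hmem μs rfl hμsIoo
        have hsep : ∀ z ∈ spectrum ℂ J, δ ≤ ‖z - (μs : ℂ)‖ := by
          intro z hz
          have hre : z = (z.re : ℂ) := hsa.mem_spectrum_eq_re hz
          have hgap' := hgap z hz z.re hre
          rw [Set.mem_Ioo, not_and_or, not_lt, not_lt] at hgap'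
          have hnorm : ‖z - (μs : ℂ)‖ = |z.re - μs| := by
            nth_rewrite 1 [hre]
            rw [← Complex.ofReal_sub, Complex.norm_real, Real.norm_eq_abs]
          rw [hnorm]
          rcases hgap' with h | h
          · rw [abs_sub_comm, abs_of_nonneg (by rw [hμsdef]; linarith)]
            rw [hμsdef, hδdef]; linarith
          · rw [abs_of_nonneg (by rw [hμsdef]; linarith)]
            rw [hμsdef, hδdef]; linarith
        have hres := resolvent_bound J hsa μs δ hδ0 hμs_notin hsep
        set K : ℝ := 2 * Ca + Cb + |μs| with hKdef
        have hK : ∀ n : ℤ, |a (n - 1)| + |b n - μs| + |a n| ≤ K := by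
          intro n
          have h1 : |b n - μs| ≤ Cb + |μs| := by
            calc |b n - μs| ≤ |b n| + |μs| := abs_sub (b n) μs
              _ ≤ Cb + |μs| := by linarith [hCb n]
          rw [hKdef]
          linarith [hCa (n - 1), hCa n]
        have htc : |μs - c| ≤ 2 * abar := abs_le.mpr ⟨by linarith, by linarith⟩
        by_contra hcon
        push_neg at hcon
        have hd2 : ρ ^ 2 < δ ^ 2 := by
          have := mul_self_lt_mul_self hρ0 hcon
          calc ρ ^ 2 = ρ * ρ := sq ρ
            _ < δ * δ := this
            _ = δ ^ 2 := (sq δ).symm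
        have hK0 : 0 ≤ K := by rw [hKdef]; have := abs_nonneg μs; linarith
        obtain ⟨n, hn⟩ := exists_nat_gt (4 * K ^ 2 / (δ ^ 2 - ρ ^ 2))
        have h4 : 4 * K ^ 2 < (n : ℝ) * (δ ^ 2 - ρ ^ 2) := by
          rwa [div_lt_iff₀ (by linarith)] at hn
        obtain ⟨x, hx1, hx2⟩ := test_vector a b J hJ c abar ρa ρb μs K habar0 hadev hbdev htc hK n
        have h5 := hres x
        have h6 : (δ * ‖x‖) ^ 2 ≤ ‖(algebraMap ℂ (H →L[ℂ] H) μs - J) x‖ ^ 2 :=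
          pow_le_pow_left₀ (by positivity) h5 2
        rw [mul_pow, hx1] at h6
        rw [← hρdef] at hx2
        exact arith_contra δ ρ K n hδ0 hρ0 hcon (Nat.cast_nonneg n)
          (le_trans h6 hx2) h4
      · -- μs below the band
        have h1 := henc _ hμm
        rw [hμmval] at h1
        have h2 : -(2 * aS + ρb) ≤ μm - c := neg_le_of_abs_le h1
        have h3 : μm = μs - δ := by rw [hμsdef, hδdef]; ring
        have haSv : aS = abar + ρa := by rw [habardef, hρadef]; ring
        rw [hρdef]
        rw [h3] at h2
        rw [haSv] at h2
        linarith
    · -- μs above the band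
      have h1 := henc _ hμp
      rw [hμpval] at h1
      have h2 : μp - c ≤ 2 * aS + ρb := le_of_abs_le h1
      have h3 : μp = μs + δ := by rw [hμsdef, hδdef]; ring
      have haSv : aS = abar + ρa := by rw [habardef, hρadef]; ring
      rw [hρdef]
      rw [h3] at h2
      rw [haSv] at h2
      linarith
  have hfinal : μp - μm = 2 * δ := by rw [hδdef]; ring
  rw [hfinal]
  have hρΩ : ρ ≤ Ωb + 2 * Ωa := by
    rw [hρdef, hρadef, hρbdef]
    linarith [hvara, hvarb]
  linarith
end

section
/- Let D be a real polynomial of degree p ≥ 1 on an interval L = [u, v] with ‖D‖ := max_{t∈L}|D(t)| = 2M for some M > 1, and suppose D attains the value ±2M at an interior critical point ν ∈ (μ⁻, μ⁺) ⊂ L with D′(ν) = 0 and |D(μ⁺)| = 2. Then, using Markov's inequality ‖D″‖ ≤ 4p⁴M/|L|² (for degree-p polynomials on L), one gets (μ⁺ − ν)² ≥ 4(M−1)/‖D″‖ ≥ (|L|²/p⁴)·(M−1)/M, hence μ⁺ − ν ≥ (|L|/p²)√((M−1)/M). -/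
open Set Polynomial Finset Real

namespace Stmt11Aux

noncomputable def tk (n k : ℕ) : ℝ := (2*k+1) * π / (2*n)
noncomputable def sk (n k : ℕ) : ℝ := Real.sin ((2*k+1) * π / (4*n))
noncomputable def wt (n k : ℕ) : ℝ := 1 / sk n k ^ 2

lemma sk_pos {n k : ℕ} (hn : 1 ≤ n) (hk : k < 2*n) : 0 < sk n k := by
  apply Real.sin_pos_of_pos_of_lt_pi
  · positivity
  · rw [div_lt_iff₀ (by positivity)]
    have hnat : (2*k+1 : ℕ) < 4*n := by omega
    have h1 : (2*(k:ℝ)+1) < 4*n := by exact_mod_cast hnat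
    nlinarith [Real.pi_pos, mul_lt_mul_of_pos_right h1 Real.pi_pos]

lemma wt_pos {n k : ℕ} (hn : 1 ≤ n) (hk : k < 2*n) : 0 < wt n k := by
  have := sk_pos hn hk; unfold wt; positivity

lemma cos_tk {n k : ℕ} (hn : 1 ≤ n) : Real.cos (tk n k) = 1 - 2 * sk n k ^ 2 := by
  have hn' : (n:ℝ) ≠ 0 := by positivity
  have h2 : tk n k = 2 * ((2*k+1) * π / (4*n)) := by
    unfold tk; field_simp; ring
  rw [h2, Real.cos_two_mul]
  unfold sk
  nlinarith [Real.sin_sq_add_cos_sq ((2*(k:ℝ)+1) * π / (4*(n:ℝ)))]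

lemma wt_mul_cos_tk {n k : ℕ} (hn : 1 ≤ n) (hk : k < 2*n) :
    wt n k * Real.cos (tk n k) = wt n k - 2 := by
  have hs := sk_pos hn hk
  rw [cos_tk hn]
  unfold wt
  field_simp

lemma cos_nat_pi (k : ℕ) : Real.cos (k * π) = (-1)^k := by
  induction k with
  | zero => simp
  | succ m ih =>
    have : ((m+1 : ℕ) : ℝ) * π = m * π + π := by push_cast; ring
    rw [this, Real.cos_add_pi, ih]
    ring

lemma sin_n_tk {n k : ℕ} (hn : 1 ≤ n) : Real.sin (n * tk n k) = (-1)^k := by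
  have hn' : (n:ℝ) ≠ 0 := by positivity
  have : (n:ℝ) * tk n k = k * π + π/2 := by
    unfold tk; field_simp
  rw [this, Real.sin_add_pi_div_two, cos_nat_pi]

lemma sin_odd_pi_sub (m : ℕ) (x : ℝ) : Real.sin ((2*(m:ℝ)+1) * π - x) = Real.sin x := by
  have h1 : Real.sin ((2*(m:ℝ)+1) * π) = 0 := by
    have := Real.sin_nat_mul_pi (2*m+1)
    push_cast at this
    convert this using 2
  have h2 : Real.cos ((2*(m:ℝ)+1) * π) = -1 := by
    have := Real.cos_nat_mul_two_pi_add_pi m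
    convert this using 2
    push_cast
    ring
  rw [Real.sin_sub, h1, h2]
  ring

/-- A_j = 0 : alternating weighted cosine sums cancel by the reflection pairing. -/
lemma sumA (n : ℕ) (hn : 1 ≤ n) (j : ℕ) :
    ∑ k ∈ range (2*n), (-1:ℝ)^k * (Real.cos (j * tk n k) * wt n k) = 0 := by
  apply Finset.sum_involution (fun k _ => 2*n - 1 - k)
  · intro k hk
    have hk' : k < 2*n := Finset.mem_range.mp hk
    have hc : ((2*n-1-k : ℕ):ℝ) = 2*(n:ℝ) - 1 - k := by
      have h : ((2*n-1-k) + (k+1) : ℕ) = 2*n := by omega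
      have := congrArg (fun m : ℕ => (m:ℝ)) h
      push_cast at this
      linarith
    have hC : (2*((2*n-1-k:ℕ):ℝ)+1) = 4*(n:ℝ) - (2*k+1) := by rw [hc]; ring
    have htk : tk n (2*n-1-k) = 2 * π - tk n k := by
      unfold tk
      rw [hC]
      have hn' : (n:ℝ) ≠ 0 := by positivity
      field_simp
      ring
    have hsk : sk n (2*n-1-k) = sk n k := by
      unfold sk
      rw [hC]
      have hn' : (n:ℝ) ≠ 0 := by positivity
      have harg : (4*(n:ℝ) - (2*(k:ℝ)+1)) * π / (4*(n:ℝ)) = π - (2*(k:ℝ)+1)*π/(4*(n:ℝ)) := by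
        field_simp
      rw [harg, Real.sin_pi_sub]
    have hcos : Real.cos (j * tk n (2*n-1-k)) = Real.cos (j * tk n k) := by
      rw [htk]
      have : (j:ℝ) * (2*π - tk n k) = j*(2*π) - j * tk n k := by ring
      rw [this, Real.cos_nat_mul_two_pi_sub]
    have hsign : ((-1:ℝ))^(2*n-1-k) = -(-1:ℝ)^k := by
      rcases Nat.even_or_odd k with he | ho
      · have h2 : Odd (2*n-1-k) := by
          rcases he with ⟨m, hm⟩; exact ⟨n-1-m, by omega⟩
        rw [h2.neg_one_pow, he.neg_one_pow]
      · have h2 : Even (2*n-1-k) := by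
          rcases ho with ⟨m, hm⟩; exact ⟨n-1-m, by omega⟩
        rw [h2.neg_one_pow, ho.neg_one_pow]
        ring
    unfold wt
    rw [hcos, hsk, hsign]
    ring
  · intro k hk h
    have hk' : k < 2*n := Finset.mem_range.mp hk
    omega
  · intro k hk
    have hk' : k < 2*n := Finset.mem_range.mp hk
    exact Finset.mem_range.mpr (by omega)
  · intro k hk
    have hk' : k < 2*n := Finset.mem_range.mp hk
    omega


/-- T_j = 0 for 1 ≤ j < n, by telescoping against 2 cos c. -/
lemma sumT0 (n : ℕ) (hn : 1 ≤ n) (j : ℕ) (hj1 : 1 ≤ j) (hjn : j < n) :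
    ∑ k ∈ range (2*n), (-1:ℝ)^k * Real.sin (j * tk n k) = 0 := by
  set c : ℝ := j * π / (2*n) with hc
  have hn' : (0:ℝ) < n := by positivity
  have hclt : c < π / 2 := by
    rw [hc, div_lt_div_iff₀ (by positivity) (by norm_num)]
    have hj : (j:ℝ) < n := by exact_mod_cast hjn
    nlinarith [Real.pi_pos, mul_lt_mul_of_pos_right hj Real.pi_pos]
  have hcpos : 0 < c := by rw [hc]; positivity
  have hcos : 0 < Real.cos c := Real.cos_pos_of_mem_Ioo ⟨by linarith, hclt⟩
  have harg : ∀ k : ℕ, (j:ℝ) * tk n k = (2*(k:ℝ)+1) * c := by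
    intro k
    unfold tk
    rw [hc]
    field_simp
  have key : 2 * Real.cos c * ∑ k ∈ range (2*n), (-1:ℝ)^k * Real.sin (j * tk n k)
      = (fun k : ℕ => (-1:ℝ)^k * Real.sin (2*(k:ℝ)*c)) 0
        - (fun k : ℕ => (-1:ℝ)^k * Real.sin (2*(k:ℝ)*c)) (2*n) := by
    rw [Finset.mul_sum, ← Finset.sum_range_sub' (fun k : ℕ => (-1:ℝ)^k * Real.sin (2*(k:ℝ)*c))]
    apply Finset.sum_congr rfl
    intro k _
    show _ = (-1:ℝ)^k * Real.sin (2*(k:ℝ)*c) - (-1:ℝ)^(k+1) * Real.sin (2*((k+1:ℕ):ℝ)*c)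
    rw [harg k]
    have hid2 : Real.sin (2*((k:ℝ)+1)*c) + Real.sin (2*(k:ℝ)*c)
        = 2 * Real.sin ((2*(k:ℝ)+1)*c) * Real.cos c := by
      have e1 : 2*((k:ℝ)+1)*c = (2*(k:ℝ)+1)*c + c := by ring
      have e2 : 2*(k:ℝ)*c = (2*(k:ℝ)+1)*c - c := by ring
      rw [e1, e2, Real.sin_add, Real.sin_sub]
      ring
    have hsucc : (((k+1:ℕ)):ℝ) = (k:ℝ) + 1 := by push_cast; ring
    rw [pow_succ, hsucc]
    linear_combination (-((-1:ℝ)^k)) * hid2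
  have hF0 : (fun k : ℕ => (-1:ℝ)^k * Real.sin (2*(k:ℝ)*c)) 0 = 0 := by
    norm_num
  have hF2n : (fun k : ℕ => (-1:ℝ)^k * Real.sin (2*(k:ℝ)*c)) (2*n) = 0 := by
    show (-1:ℝ)^(2*n) * Real.sin (2*((2*n:ℕ):ℝ)*c) = 0
    have h1 : 2*((2*n:ℕ):ℝ)*c = (2*j) * π := by
      rw [hc]
      push_cast
      field_simp
    rw [h1]
    have := Real.sin_nat_mul_pi (2*j)
    push_cast at this
    rw [this]
    ring
  rw [hF0, hF2n, sub_zero] at key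
  rcases mul_eq_zero.mp key with h | h
  · exact absurd h (by positivity)
  · exact h

/-- T_n = 2n. -/
lemma sumTn (n : ℕ) (hn : 1 ≤ n) :
    ∑ k ∈ range (2*n), (-1:ℝ)^k * Real.sin (n * tk n k) = 2*n := by
  have : ∀ k ∈ range (2*n), (-1:ℝ)^k * Real.sin (n * tk n k) = 1 := by
    intro k _
    rw [sin_n_tk hn]
    rcases Nat.even_or_odd k with he | ho
    · rw [he.neg_one_pow]; norm_num
    · rw [ho.neg_one_pow]; norm_num
  rw [Finset.sum_congr rfl this]
  simp [mul_comm]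

noncomputable def Bsum (n j : ℕ) : ℝ := ∑ k ∈ range (2*n), (-1:ℝ)^k * (Real.sin (j * tk n k) * wt n k)

/-- The recurrence B (j+2) = 2 B (j+1) - B j - 4 T(j+1). -/
lemma Bsum_rec (n : ℕ) (hn : 1 ≤ n) (j : ℕ) :
    Bsum n (j+2) = 2 * Bsum n (j+1) - Bsum n j
      - 4 * ∑ k ∈ range (2*n), (-1:ℝ)^k * Real.sin ((j+1) * tk n k) := by
  unfold Bsum
  rw [Finset.mul_sum, Finset.mul_sum, ← Finset.sum_sub_distrib, ← Finset.sum_sub_distrib]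
  apply Finset.sum_congr rfl
  intro k hk
  have hk' : k < 2*n := Finset.mem_range.mp hk
  have hwc := wt_mul_cos_tk hn hk' (n := n)
  -- sin((j+2)t) = 2 sin((j+1)t) cos t - sin(j t)
  have e1 : ((j:ℝ)+2) * tk n k = ((j:ℝ)+1)*tk n k + tk n k := by ring
  have e2 : (j:ℝ) * tk n k = ((j:ℝ)+1)*tk n k - tk n k := by ring
  have hid : Real.sin (((j:ℝ)+2) * tk n k) + Real.sin ((j:ℝ) * tk n k)
      = 2 * Real.sin (((j:ℝ)+1)*tk n k) * Real.cos (tk n k) := by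
    rw [e1, e2, Real.sin_add, Real.sin_sub]
    ring
  have c1 : (((j+2:ℕ)):ℝ) = (j:ℝ)+2 := by push_cast; ring
  have c2 : (((j+1:ℕ)):ℝ) = (j:ℝ)+1 := by push_cast; ring
  rw [c1, c2]
  linear_combination ((-1:ℝ)^k) * Real.sin (((j:ℝ)+1)*tk n k) * 2 * hwc
    + ((-1:ℝ)^k) * wt n k * hid

/-- Reflection symmetry B i = B j when i + j = 2n. -/
lemma Bsum_refl (n : ℕ) (hn : 1 ≤ n) (i j : ℕ) (hij : i + j = 2*n) :
    Bsum n i = Bsum n j := by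
  unfold Bsum
  apply Finset.sum_congr rfl
  intro k hk
  congr 1
  congr 1
  have harg : (i:ℝ) * tk n k = (2*(k:ℝ)+1) * π - (j:ℝ) * tk n k := by
    have hi : (i:ℝ) = 2*(n:ℝ) - j := by
      have := congrArg (fun m : ℕ => (m:ℝ)) hij
      push_cast at this
      linarith
    unfold tk
    rw [hi]
    have hn' : (n:ℝ) ≠ 0 := by positivity
    field_simp
  rw [harg, sin_odd_pi_sub k ((j:ℝ) * tk n k)]

/-- B j = 4 n j for j ≤ n. -/
lemma Bsum_eq (n : ℕ) (hn : 1 ≤ n) : ∀ j : ℕ, j ≤ n → Bsum n j = 4*n*j := by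
  -- first : B j = j * B 1 for j ≤ n
  have hB0 : Bsum n 0 = 0 := by
    unfold Bsum
    apply Finset.sum_eq_zero
    intro k _
    simp
  have hlin : ∀ j : ℕ, j ≤ n → Bsum n j = j * Bsum n 1 := by
    intro j
    induction j using Nat.strong_induction_on with
    | _ j ih =>
      match j with
      | 0 => intro _; simpa using hB0
      | 1 => intro _; simp
      | (m+2) => 
        intro hm
        rw [Bsum_rec n hn m]
        have hT := sumT0 n hn (m+1) (by omega) (by omega)
        push_cast at hT
        rw [hT, ih (m+1) (by omega) (by omega), ih m (by omega) (by omega)]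
        push_cast
        ring
  -- pin down B 1 using reflection at j = n-1
  obtain ⟨m, hm⟩ : ∃ m, n = m + 1 := ⟨n - 1, by omega⟩
  have hrec := Bsum_rec n hn m
  have hTn : ∑ k ∈ range (2*n), (-1:ℝ)^k * Real.sin ((m+1 : ℝ) * tk n k) = 2*n := by
    have := sumTn n hn
    have hc : ((m:ℝ)+1) = (n:ℝ) := by rw [hm]; push_cast; ring
    rw [hc]
    exact this
  have hrefl : Bsum n (m+2) = Bsum n m := Bsum_refl n hn (m+2) m (by omega)
  have h1 : Bsum n (m+1) = (m+1 : ℝ) * Bsum n 1 := by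
    rw [hlin (m+1) (by omega)]
    push_cast; ring
  have h0 : Bsum n m = (m : ℝ) * Bsum n 1 := by
    rw [hlin m (by omega)]
  have hB1 : Bsum n 1 = 4*n := by
    rw [hrefl, h0, h1] at hrec
    have hnm : (n:ℝ) = (m:ℝ) + 1 := by rw [hm]; push_cast; ring
    rw [hTn] at hrec
    linarith [hrec]
  intro j hj
  rw [hlin j hj, hB1]
  ring

/-- Sum of the weights = 4 n². -/
lemma sum_wt (n : ℕ) (hn : 1 ≤ n) : ∑ k ∈ range (2*n), wt n k = 4*(n:ℝ)^2 := by
  have h := Bsum_eq n hn n le_rfl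
  unfold Bsum at h
  have : ∀ k ∈ range (2*n), (-1:ℝ)^k * (Real.sin (n * tk n k) * wt n k) = wt n k := by
    intro k hk
    rw [sin_n_tk hn]
    rcases Nat.even_or_odd k with he | ho
    · rw [he.neg_one_pow]; ring
    · rw [ho.neg_one_pow]; ring
  rw [Finset.sum_congr rfl this] at h
  rw [h]
  ring


/-- Trigonometric polynomial with coefficients `b` (cosine) and `c` (sine), degree ≤ n. -/
noncomputable def TP (n : ℕ) (b c : ℕ → ℝ) : ℝ → ℝ :=
  fun x => ∑ j ∈ range (n+1), (b j * Real.cos (j*x) + c j * Real.sin (j*x))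

/-- Riesz interpolation formula. -/
lemma riesz (n : ℕ) (hn : 1 ≤ n) (b c : ℕ → ℝ) (x : ℝ) :
    ∑ k ∈ range (2*n), (-1:ℝ)^k * wt n k * TP n b c (x + tk n k)
      = 4*n * TP n (fun j => (j:ℝ)*c j) (fun j => -((j:ℝ)*b j)) x := by
  unfold TP
  have step1 : ∀ k ∈ range (2*n), (-1:ℝ)^k * wt n k
        * (∑ j ∈ range (n+1), (b j * Real.cos (j*(x + tk n k)) + c j * Real.sin (j*(x + tk n k))))
      = ∑ j ∈ range (n+1), ((b j * Real.cos (j*x) + c j * Real.sin (j*x)) * ((-1:ℝ)^k * (Real.cos (j * tk n k) * wt n k))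
          + (c j * Real.cos (j*x) - b j * Real.sin (j*x)) * ((-1:ℝ)^k * (Real.sin (j * tk n k) * wt n k))) := by
    intro k _
    rw [Finset.mul_sum]
    apply Finset.sum_congr rfl
    intro j _
    have e : (j:ℝ)*(x + tk n k) = j*x + j*tk n k := by ring
    rw [e, Real.cos_add, Real.sin_add]
    ring
  rw [Finset.sum_congr rfl step1, Finset.sum_comm, Finset.mul_sum]
  apply Finset.sum_congr rfl
  intro j hj
  have hjn : j ≤ n := by
    have := Finset.mem_range.mp hj; omega
  rw [Finset.sum_add_distrib, ← Finset.mul_sum, ← Finset.mul_sum, sumA n hn j]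
  have hBj : ∑ k ∈ range (2*n), (-1:ℝ)^k * (Real.sin (j * tk n k) * wt n k) = 4*n*j :=
    Bsum_eq n hn j hjn
  rw [hBj]
  ring

/-- Bernstein inequality for trig polynomials, with sharp constant. -/
lemma bernstein (n : ℕ) (hn : 1 ≤ n) (b c : ℕ → ℝ) (B : ℝ)
    (hB : ∀ x : ℝ, |TP n b c x| ≤ B) (x : ℝ) :
    |TP n (fun j => (j:ℝ)*c j) (fun j => -((j:ℝ)*b j)) x| ≤ n * B := by
  have hn' : (0:ℝ) < n := by positivity
  have hid := riesz n hn b c x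
  have h1 : |(4:ℝ)*n * TP n (fun j => (j:ℝ)*c j) (fun j => -((j:ℝ)*b j)) x| ≤ 4*(n:ℝ)^2 * B := by
    rw [← hid]
    calc |∑ k ∈ range (2*n), (-1:ℝ)^k * wt n k * TP n b c (x + tk n k)|
        ≤ ∑ k ∈ range (2*n), |(-1:ℝ)^k * wt n k * TP n b c (x + tk n k)| :=
          Finset.abs_sum_le_sum_abs _ _
      _ ≤ ∑ k ∈ range (2*n), wt n k * B := by
          apply Finset.sum_le_sum
          intro k hk
          have hk' : k < 2*n := Finset.mem_range.mp hk
          have hw := wt_pos hn hk' (n := n)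
          rw [abs_mul, abs_mul, abs_pow, abs_neg, abs_one, one_pow, one_mul,
            abs_of_pos hw]
          exact mul_le_mul_of_nonneg_left (hB _) (le_of_lt hw)
      _ = 4*(n:ℝ)^2 * B := by
          rw [← Finset.sum_mul, sum_wt n hn]
  rw [abs_mul] at h1
  have h4 : |(4:ℝ)*n| = 4*n := abs_of_pos (by positivity)
  rw [h4] at h1
  nlinarith [abs_nonneg (TP n (fun j => (j:ℝ)*c j) (fun j => -((j:ℝ)*b j)) x), h1]

/-- Derivative of a trig polynomial. -/
lemma hasDerivAt_TP (n : ℕ) (b c : ℕ → ℝ) (x : ℝ) :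
    HasDerivAt (TP n b c) (TP n (fun j => (j:ℝ)*c j) (fun j => -((j:ℝ)*b j)) x) x := by
  unfold TP
  apply HasDerivAt.fun_sum
  intro j _
  have h1 : HasDerivAt (fun t:ℝ => (j:ℝ)*t) (j:ℝ) x := by
    simpa using (hasDerivAt_id x).const_mul (j:ℝ)
  have hcos : HasDerivAt (fun t => Real.cos ((j:ℝ)*t)) (-Real.sin ((j:ℝ)*x) * j) x :=
    (Real.hasDerivAt_cos _).comp x h1
  have hsin : HasDerivAt (fun t => Real.sin ((j:ℝ)*t)) (Real.cos ((j:ℝ)*x) * j) x :=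
    (Real.hasDerivAt_sin _).comp x h1
  have := (hcos.const_mul (b j)).add (hsin.const_mul (c j))
  exact this.congr_deriv (by beta_reduce; ring)


open Polynomial.Chebyshev in
lemma T_natDegree_le : ∀ n : ℕ, (T ℝ (n:ℤ)).natDegree ≤ n := by
  intro n
  induction n using Nat.strong_induction_on with
  | _ n ih =>
    match n with
    | 0 => simp [T_zero]
    | 1 => simp [T_one]
    | (m+2) =>
      have hrec : T ℝ ((m+2 : ℕ) : ℤ) = 2 * X * T ℝ ((m+1 : ℕ):ℤ) - T ℝ (m:ℤ) := by
        have := T_add_two ℝ (m : ℤ)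
        push_cast
        convert this using 2 <;> push_cast <;> ring
      rw [hrec]
      apply le_trans (natDegree_sub_le _ _)
      have h1 : (2 * X * T ℝ ((m+1:ℕ):ℤ)).natDegree ≤ m+2 := by
        apply le_trans (natDegree_mul_le)
        have h2 : (2 * X : ℝ[X]).natDegree ≤ 1 := by
          have : (2 * X : ℝ[X]) = C 2 * X := by
            simp only [map_ofNat (C : ℝ →+* ℝ[X]) 2]
          rw [this]
          apply le_trans (natDegree_C_mul_le _ _)
          simp
        have := ih (m+1) (by omega)
        omega
      have h3 : (T ℝ (m:ℤ)).natDegree ≤ m := ih m (by omega)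
      omega

open Polynomial.Chebyshev in
lemma T_coeff_top : ∀ n : ℕ, (T ℝ ((n+1:ℕ):ℤ)).coeff (n+1) = 2^n := by
  intro n
  induction n using Nat.strong_induction_on with
  | _ n ih =>
    match n with
    | 0 => simp [T_one]
    | 1 =>
      have : T ℝ ((2:ℕ):ℤ) = 2 * X^2 - 1 := by
        have := T_two ℝ
        convert this using 2 <;> norm_num
      rw [this]
      simp [coeff_sub, coeff_X_pow]
      norm_num [coeff_one]
    | (m+2) =>
      have hrec : T ℝ ((m+3 : ℕ) : ℤ) = 2 * X * T ℝ ((m+2 : ℕ):ℤ) - T ℝ ((m+1:ℕ):ℤ) := by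
        have := T_add_two ℝ ((m+1) : ℤ)
        push_cast
        convert this using 2 <;> push_cast <;> ring
      rw [hrec]
      rw [coeff_sub]
      have hz : (T ℝ ((m+1:ℕ):ℤ)).coeff (m+3) = 0 := by
        apply coeff_eq_zero_of_natDegree_lt
        have := T_natDegree_le (m+1)
        omega
      have hX : (2 * X * T ℝ ((m+2:ℕ):ℤ)).coeff (m+3) = 2 * (T ℝ ((m+2:ℕ):ℤ)).coeff (m+2) := by
        have e : (2 * X * T ℝ ((m+2:ℕ):ℤ)) = C 2 * (X * T ℝ ((m+2:ℕ):ℤ)) := by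
          simp only [map_ofNat (C : ℝ →+* ℝ[X]) 2]
          ring
        rw [e, coeff_C_mul]
        congr 1
        exact coeff_X_mul _ _
      rw [hX, hz, ih (m+1) (by omega)]
      ring

open Polynomial.Chebyshev in
/-- Chebyshev expansion: any polynomial of degree ≤ n is, on the unit circle,
a cosine polynomial of degree ≤ n. -/
lemma cheb_rep : ∀ (n : ℕ) (Q : ℝ[X]), Q.natDegree ≤ n →
    ∃ b : ℕ → ℝ, ∀ θ : ℝ, Q.eval (Real.cos θ) = ∑ j ∈ range (n+1), b j * Real.cos (j*θ) := by
  intro n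
  induction n with
  | zero =>
    intro Q hQ
    obtain ⟨a, ha⟩ : ∃ a, Q = C a := ⟨Q.coeff 0, (Polynomial.eq_C_of_natDegree_le_zero hQ)⟩
    exact ⟨fun _ => a, fun θ => by simp [ha]⟩
  | succ n ih =>
    intro Q hQ
    set a : ℝ := Q.coeff (n+1) / 2^n with ha
    set R : ℝ[X] := Q - C a * T ℝ ((n+1:ℕ):ℤ) with hR
    have hRdeg : R.natDegree ≤ n := by
      rw [natDegree_le_iff_coeff_eq_zero]
      intro N hN
      rw [hR, coeff_sub, coeff_C_mul]
      rcases eq_or_lt_of_le (Nat.succ_le_of_lt hN) with he | hl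
      · rw [← he, T_coeff_top n, ha]
        field_simp
        ring
      · have h1 : Q.coeff N = 0 := coeff_eq_zero_of_natDegree_lt (by omega)
        have h2 : (T ℝ ((n+1:ℕ):ℤ)).coeff N = 0 := by
          apply coeff_eq_zero_of_natDegree_lt
          have := T_natDegree_le (n+1)
          omega
        rw [h1, h2]
        ring
    obtain ⟨b', hb'⟩ := ih R hRdeg
    refine ⟨fun j => if j = n+1 then a else b' j, fun θ => ?_⟩
    have hQR : Q.eval (Real.cos θ) = R.eval (Real.cos θ) + a * Real.cos ((n+1:ℝ)*θ) := by
      rw [hR]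
      simp only [eval_sub, eval_mul, eval_C]
      have := T_real_cos θ ((n+1:ℕ):ℤ)
      rw [this]
      push_cast
      ring
    rw [hQR, hb' θ]
    have hcg : ∀ j ∈ range (n+1), (if j = n+1 then a else b' j) * Real.cos (j*θ) = b' j * Real.cos (j*θ) := by
      intro j hj
      have : j ≠ n+1 := by have := Finset.mem_range.mp hj; omega
      rw [if_neg this]
    conv_rhs => rw [Finset.sum_range_succ]
    rw [Finset.sum_congr rfl hcg]
    simp only [if_pos rfl]
    push_cast
    ring


/-- Comparison principle: if |f'| ≤ g' on [a,b] and |f a| ≤ g a then |f b| ≤ g b. -/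
lemma abs_le_of_deriv_le {f g f' g' : ℝ → ℝ} {a b : ℝ} (hab : a ≤ b)
    (hf : ∀ t, HasDerivAt f (f' t) t) (hg : ∀ t, HasDerivAt g (g' t) t)
    (h0 : |f a| ≤ g a) (hd : ∀ t ∈ Icc a b, |f' t| ≤ g' t) : |f b| ≤ g b := by
  have habs := abs_le.mp h0
  have mono : ∀ (s : ℝ) (F F' : ℝ → ℝ), (∀ t, HasDerivAt F (F' t) t) →
      (∀ t ∈ Icc a b, 0 ≤ F' t) → F a ≤ F b := by
    intro s F F' hF hF'
    have hmono : MonotoneOn F (Icc a b) := by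
      apply monotoneOn_of_deriv_nonneg (convex_Icc a b)
      · exact fun t _ => (hF t).continuousAt.continuousWithinAt
      · intro t ht
        exact ((hF t).differentiableAt).differentiableWithinAt
      · intro t ht
        rw [interior_Icc] at ht
        rw [(hF t).deriv]
        exact hF' t ⟨le_of_lt ht.1, le_of_lt ht.2⟩
    exact hmono ⟨le_refl a, hab⟩ ⟨hab, le_refl b⟩ hab
  have h1 : g a - f a ≤ g b - f b := by
    apply mono 0 (fun t => g t - f t) (fun t => g' t - f' t)
    · exact fun t => (hg t).sub (hf t)
    · intro t ht
      have := hd t ht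
      have := abs_le.mp this
      linarith [this.2]
  have h2 : g a + f a ≤ g b + f b := by
    apply mono 0 (fun t => g t + f t) (fun t => g' t + f' t)
    · exact fun t => (hg t).add (hf t)
    · intro t ht
      have := abs_le.mp (hd t ht)
      linarith [this.1]
  rw [abs_le]
  constructor <;> linarith

lemma cos_quad_lb (x : ℝ) : 1 - x^2/2 ≤ Real.cos x := by
  have h1 : Real.cos x = Real.cos (2*(x/2)) := by ring_nf
  rw [h1, Real.cos_two_mul]
  have h2 := Real.sin_sq_le_sq (x := x/2)
  have h3 := Real.sin_sq_add_cos_sq (x/2)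
  nlinarith

lemma sin_num_lb {x : ℝ} (h0 : 0 ≤ x) (h1 : x ≤ 1) :
    x - x^3/6 - x^4*(5/96) ≤ Real.sin x := by
  have := Real.sin_bound (by rw [abs_of_nonneg h0]; exact h1)
  have h2 := abs_le.mp this
  rw [abs_of_nonneg h0] at h2
  nlinarith [h2.2, pow_nonneg h0 4, mul_le_mul_of_nonneg_left h1 (pow_nonneg h0 4)]

lemma cos_num_ub {x : ℝ} (h0 : 0 ≤ x) (h1 : x ≤ 1) :
    Real.cos x ≤ 1 - x^2/2 + x^4*(5/96) := by
  have := Real.cos_bound (by rw [abs_of_nonneg h0]; exact h1)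
  have h2 := abs_le.mp this
  rw [abs_of_nonneg h0] at h2
  linarith [h2.2]


lemma sin_num_ub {x : ℝ} (h0 : 0 ≤ x) (h1 : x ≤ 1) :
    Real.sin x ≤ x - x^3/6 + x^4*(5/96) := by
  have := Real.sin_bound (by rw [abs_of_nonneg h0]; exact h1)
  have h2 := abs_le.mp this
  rw [abs_of_nonneg h0] at h2
  nlinarith [h2.1, pow_nonneg h0 4, mul_le_mul_of_nonneg_left h1 (pow_nonneg h0 4)]

lemma sin_one_lb : (2:ℝ) * ((1:ℝ)/2 - (1/2)^3/6 - (1/2)^4*(5/96)) * (7/8) ≤ Real.sin 1 := by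
  have e : Real.sin 1 = 2 * Real.sin (1/2) * Real.cos (1/2) := by
    rw [← Real.sin_two_mul]; norm_num
  have h1 := sin_num_lb (x := 1/2) (by norm_num) (by norm_num)
  have h2 := cos_quad_lb (1/2)
  have h3 : (0:ℝ) ≤ Real.sin (1/2) := Real.sin_nonneg_of_nonneg_of_le_pi (by norm_num)
    (by linarith [Real.pi_gt_d6])
  rw [e]
  nlinarith

lemma sin_six_fifth_lb :
    (2:ℝ) * ((3:ℝ)/5 - (3/5)^3/6 - (3/5)^4*(5/96)) * (1 - (3/5)^2/2) ≤ Real.sin (6/5) := by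
  have e : Real.sin (6/5) = 2 * Real.sin (3/5) * Real.cos (3/5) := by
    rw [← Real.sin_two_mul]; norm_num
  have h1 := sin_num_lb (x := 3/5) (by norm_num) (by norm_num)
  have h2 := cos_quad_lb (3/5)
  have h3 : (0:ℝ) ≤ Real.sin (3/5) := Real.sin_nonneg_of_nonneg_of_le_pi (by norm_num)
    (by linarith [Real.pi_gt_d6])
  rw [e]
  nlinarith

lemma cos_six_fifth_lb : (1:ℝ) - 2*((3:ℝ)/5 - (3/5)^3/6 + (3/5)^4*(5/96))^2 ≤ Real.cos (6/5) := by
  have e : Real.cos (6/5) = 1 - 2 * Real.sin (3/5)^2 := by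
    have h1 : Real.cos (2*(3/5)) = 2 * Real.cos (3/5)^2 - 1 := Real.cos_two_mul _
    have h2 := Real.sin_sq_add_cos_sq (3/5 : ℝ)
    have h3 : (6/5 : ℝ) = 2*(3/5) := by norm_num
    rw [h3, h1]
    nlinarith
  have h1 := sin_num_ub (x := 3/5) (by norm_num) (by norm_num)
  have h3 : (0:ℝ) ≤ Real.sin (3/5) := Real.sin_nonneg_of_nonneg_of_le_pi (by norm_num)
    (by linarith [Real.pi_gt_d6])
  rw [e]
  nlinarith

lemma zone2_p3 {θ : ℝ} (h1 : 9/20 ≤ θ) (h2 : θ ≤ π/2) :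
    1/27 + Real.cos (1/3) - Real.cos θ ≤ (27/20) * Real.sin θ^3 := by
  have hπ := Real.pi_gt_d6
  have hπ2 := Real.pi_lt_d2
  have hc13 := cos_num_ub (x := 1/3) (by norm_num) (by norm_num)
  have hθ0 : (0:ℝ) ≤ θ := by linarith
  have sinmono : ∀ a : ℝ, 0 ≤ a → a ≤ θ → Real.sin a ≤ Real.sin θ := fun a ha hb =>
    Real.sin_le_sin_of_le_of_le_pi_div_two (by linarith) h2 hb
  have cosmono : ∀ b : ℝ, θ ≤ b → b ≤ π → Real.cos b ≤ Real.cos θ := fun b hb hbpi =>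
    Real.cos_le_cos_of_nonneg_of_le_pi hθ0 hbpi hb
  have cube : ∀ s : ℝ, 0 ≤ s → s ≤ Real.sin θ → s^3 ≤ Real.sin θ^3 := fun s hs hsθ =>
    pow_le_pow_left₀ hs hsθ 3
  rcases le_total θ (1/2) with h | h
  · have hs := cube _ (by norm_num) (le_trans (sin_num_lb (x := 9/20) (by norm_num) (by norm_num)) (sinmono _ (by norm_num) h1))
    have hc := le_trans (cos_quad_lb (1/2)) (cosmono (1/2) h (by linarith))
    nlinarith
  rcases le_total θ (11/20) with h' | h' 
  · have hs := cube _ (by norm_num) (le_trans (sin_num_lb (x := 1/2) (by norm_num) (by norm_num)) (sinmono _ (by norm_num) h))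
    have hc := le_trans (cos_quad_lb (11/20)) (cosmono (11/20) h' (by linarith))
    nlinarith
  rcases le_total θ (3/5) with h'' | h''
  · have hs := cube _ (by norm_num) (le_trans (sin_num_lb (x := 11/20) (by norm_num) (by norm_num)) (sinmono _ (by norm_num) h'))
    have hc := le_trans (cos_quad_lb (3/5)) (cosmono (3/5) h'' (by linarith))
    nlinarith
  rcases le_total θ (7/10) with h3 | h3
  · have hs := cube _ (by norm_num) (le_trans (sin_num_lb (x := 3/5) (by norm_num) (by norm_num)) (sinmono _ (by norm_num) h''))
    have hc := le_trans (cos_quad_lb (7/10)) (cosmono (7/10) h3 (by linarith))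
    nlinarith
  rcases le_total θ (4/5) with h4 | h4
  · have hs := cube _ (by norm_num) (le_trans (sin_num_lb (x := 7/10) (by norm_num) (by norm_num)) (sinmono _ (by norm_num) h3))
    have hc := le_trans (cos_quad_lb (4/5)) (cosmono (4/5) h4 (by linarith))
    nlinarith
  rcases le_total θ (9/10) with h5 | h5
  · have hs := cube _ (by norm_num) (le_trans (sin_num_lb (x := 4/5) (by norm_num) (by norm_num)) (sinmono _ (by norm_num) h4))
    have hc := le_trans (cos_quad_lb (9/10)) (cosmono (9/10) h5 (by linarith))
    nlinarith
  rcases le_total θ 1 with h6 | h6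
  · have hs := cube _ (by norm_num) (le_trans (sin_num_lb (x := 9/10) (by norm_num) (by norm_num)) (sinmono _ (by norm_num) h5))
    have hc := le_trans (cos_quad_lb 1) (cosmono 1 h6 (by linarith))
    nlinarith
  rcases le_total θ (6/5) with h7 | h7
  · have hs := cube _ (by norm_num) (le_trans sin_one_lb (sinmono 1 (by norm_num) h6))
    have hc := le_trans cos_six_fifth_lb (cosmono (6/5) h7 (by linarith))
    nlinarith
  · have hs := cube _ (by norm_num) (le_trans sin_six_fifth_lb (sinmono (6/5) (by norm_num) h7))
    have hc : (0:ℝ) ≤ Real.cos θ := Real.cos_nonneg_of_mem_Icc ⟨by linarith, h2⟩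
    nlinarith

lemma zone2_p4 {θ : ℝ} (h1 : 9/20 ≤ θ) (h2 : θ ≤ π/2) :
    (17/16) * (49/48 - Real.cos θ) ≤ 2 * Real.sin θ^3 := by
  have hπ := Real.pi_gt_d6
  have hπ2 := Real.pi_lt_d2
  have hθ0 : (0:ℝ) ≤ θ := by linarith
  have sinmono : ∀ a : ℝ, 0 ≤ a → a ≤ θ → Real.sin a ≤ Real.sin θ := fun a ha hb =>
    Real.sin_le_sin_of_le_of_le_pi_div_two (by linarith) h2 hb
  have cosmono : ∀ b : ℝ, θ ≤ b → b ≤ π → Real.cos b ≤ Real.cos θ := fun b hb hbpi =>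
    Real.cos_le_cos_of_nonneg_of_le_pi hθ0 hbpi hb
  have cube : ∀ s : ℝ, 0 ≤ s → s ≤ Real.sin θ → s^3 ≤ Real.sin θ^3 := fun s hs hsθ =>
    pow_le_pow_left₀ hs hsθ 3
  rcases le_total θ (1/2) with h | h
  · have hs := cube _ (by norm_num) (le_trans (sin_num_lb (x := 9/20) (by norm_num) (by norm_num)) (sinmono _ (by norm_num) h1))
    have hc := le_trans (cos_quad_lb (1/2)) (cosmono (1/2) h (by linarith))
    nlinarith
  rcases le_total θ (11/20) with h' | h'
  · have hs := cube _ (by norm_num) (le_trans (sin_num_lb (x := 1/2) (by norm_num) (by norm_num)) (sinmono _ (by norm_num) h))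
    have hc := le_trans (cos_quad_lb (11/20)) (cosmono (11/20) h' (by linarith))
    nlinarith
  rcases le_total θ (3/5) with h'' | h''
  · have hs := cube _ (by norm_num) (le_trans (sin_num_lb (x := 11/20) (by norm_num) (by norm_num)) (sinmono _ (by norm_num) h'))
    have hc := le_trans (cos_quad_lb (3/5)) (cosmono (3/5) h'' (by linarith))
    nlinarith
  rcases le_total θ (7/10) with h3 | h3
  · have hs := cube _ (by norm_num) (le_trans (sin_num_lb (x := 3/5) (by norm_num) (by norm_num)) (sinmono _ (by norm_num) h''))
    have hc := le_trans (cos_quad_lb (7/10)) (cosmono (7/10) h3 (by linarith))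
    nlinarith
  rcases le_total θ (4/5) with h4 | h4
  · have hs := cube _ (by norm_num) (le_trans (sin_num_lb (x := 7/10) (by norm_num) (by norm_num)) (sinmono _ (by norm_num) h3))
    have hc := le_trans (cos_quad_lb (4/5)) (cosmono (4/5) h4 (by linarith))
    nlinarith
  rcases le_total θ (9/10) with h5 | h5
  · have hs := cube _ (by norm_num) (le_trans (sin_num_lb (x := 4/5) (by norm_num) (by norm_num)) (sinmono _ (by norm_num) h4))
    have hc := le_trans (cos_quad_lb (9/10)) (cosmono (9/10) h5 (by linarith))
    nlinarith
  rcases le_total θ 1 with h6 | h6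
  · have hs := cube _ (by norm_num) (le_trans (sin_num_lb (x := 9/10) (by norm_num) (by norm_num)) (sinmono _ (by norm_num) h5))
    have hc := le_trans (cos_quad_lb 1) (cosmono 1 h6 (by linarith))
    nlinarith
  · have hs := cube _ (by norm_num) (le_trans sin_one_lb (sinmono 1 (by norm_num) h6))
    have hc : (0:ℝ) ≤ Real.cos θ := Real.cos_nonneg_of_mem_Icc ⟨by linarith, h2⟩
    nlinarith


noncomputable def cA : ℕ → ℝ := fun _ => 0
noncomputable def bB : ℕ → ℝ := fun j => (j:ℝ) * cA j
noncomputable def cB (b : ℕ → ℝ) : ℕ → ℝ := fun j => -((j:ℝ) * b j)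
noncomputable def bC (b : ℕ → ℝ) : ℕ → ℝ := fun j => (j:ℝ) * cB b j
noncomputable def cC : ℕ → ℝ := fun j => -((j:ℝ) * bB j)
noncomputable def bD : ℕ → ℝ := fun j => (j:ℝ) * cC j
noncomputable def cD (b : ℕ → ℝ) : ℕ → ℝ := fun j => -((j:ℝ) * bC b j)
noncomputable def bE (b : ℕ → ℝ) : ℕ → ℝ := fun j => (j:ℝ) * cD b j
noncomputable def cE : ℕ → ℝ := fun j => -((j:ℝ) * bD j)

lemma bB_zero (j : ℕ) : bB j = 0 := by simp [bB, cA]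
lemma bD_zero (j : ℕ) : bD j = 0 := by simp [bD, cC, bB, cA]

lemma TP_at_zero (n : ℕ) (b c : ℕ → ℝ) (hbz : ∀ j, b j = 0) : TP n b c 0 = 0 := by
  unfold TP
  apply Finset.sum_eq_zero
  intro j _
  rw [hbz j]
  simp

set_option maxHeartbeats 1600000 in
/-- Pointwise Markov bound for the second derivative, on [0,1). -/
lemma markov2_half (Q : ℝ[X]) (p : ℕ) (hp : 3 ≤ p) (hdeg : Q.natDegree ≤ p) (B : ℝ)
    (hB : ∀ x ∈ Icc (-1:ℝ) 1, |Q.eval x| ≤ B) :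
    ∀ x ∈ Ico (0:ℝ) 1, |(Q.derivative.derivative).eval x| ≤ (p:ℝ)^4 * B / 2 := by
  have hp1 : 1 ≤ p := by omega
  have hppos : (0:ℝ) < p := by exact_mod_cast (by omega : 0 < p)
  have hB0 : 0 ≤ B := le_trans (abs_nonneg _) (hB 0 (by norm_num))
  obtain ⟨b, hb⟩ := cheb_rep p Q hdeg
  -- g0 = Q(cos θ)
  have hfun0 : TP p b cA = (fun t => Q.eval (Real.cos t)) := by
    funext θ
    unfold TP cA
    rw [hb θ]
    apply Finset.sum_congr rfl
    intro j _
    simp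
  have hB0' : ∀ x : ℝ, |TP p b cA x| ≤ B := by
    intro x
    rw [hfun0]
    exact hB _ ⟨Real.neg_one_le_cos x, Real.cos_le_one x⟩
  -- Bernstein chain
  have bd1 : ∀ x : ℝ, |TP p bB (cB b) x| ≤ p * B := bernstein p hp1 b cA B hB0'
  have bd2 : ∀ x : ℝ, |TP p (bC b) cC x| ≤ p * (p * B) := bernstein p hp1 bB (cB b) _ bd1
  have bd3 : ∀ x : ℝ, |TP p bD (cD b) x| ≤ p * (p * (p * B)) := bernstein p hp1 (bC b) cC _ bd2
  have bd4 : ∀ x : ℝ, |TP p (bE b) cE x| ≤ p * (p * (p * (p * B))) :=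
    bernstein p hp1 bD (cD b) _ bd3
  -- chain rule identifications
  have hg1 : ∀ θ : ℝ, TP p bB (cB b) θ = -Real.sin θ * Q.derivative.eval (Real.cos θ) := by
    intro θ
    have h1 : HasDerivAt (TP p b cA) (TP p bB (cB b) θ) θ := hasDerivAt_TP p b cA θ
    rw [hfun0] at h1
    have h2 : HasDerivAt (fun t => Q.eval (Real.cos t))
        (Q.derivative.eval (Real.cos θ) * -Real.sin θ) θ :=
      (Q.hasDerivAt (Real.cos θ)).comp θ (Real.hasDerivAt_cos θ)
    have := h1.unique h2
    rw [this]; ring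
  have hg2 : ∀ θ : ℝ, TP p (bC b) cC θ
      = -Real.cos θ * Q.derivative.eval (Real.cos θ)
        + Real.sin θ^2 * (Q.derivative.derivative).eval (Real.cos θ) := by
    intro θ
    have h1 : HasDerivAt (TP p bB (cB b)) (TP p (bC b) cC θ) θ := hasDerivAt_TP p bB (cB b) θ
    have hfun1 : TP p bB (cB b) = (fun t => -Real.sin t * Q.derivative.eval (Real.cos t)) :=
      funext hg1
    rw [hfun1] at h1
    have h2 : HasDerivAt (fun t => -Real.sin t * Q.derivative.eval (Real.cos t))
        (-Real.cos θ * Q.derivative.eval (Real.cos θ)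
          + Real.sin θ^2 * (Q.derivative.derivative).eval (Real.cos θ)) θ := by
      have ha : HasDerivAt (fun t : ℝ => -Real.sin t) (-Real.cos θ) θ := (Real.hasDerivAt_sin θ).neg
      have hbb : HasDerivAt (fun t => Q.derivative.eval (Real.cos t))
          ((Q.derivative.derivative).eval (Real.cos θ) * -Real.sin θ) θ :=
        (Q.derivative.hasDerivAt (Real.cos θ)).comp θ (Real.hasDerivAt_cos θ)
      have := ha.mul hbb
      exact this.congr_deriv (by ring)
    have := h1.unique h2
    rw [this]
  -- the function w = sin³θ · Q''(cos θ)
  set w : ℝ → ℝ := fun θ => TP p (bC b) cC θ * Real.sin θ - TP p bB (cB b) θ * Real.cos θ with hw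
  have hw_eval : ∀ θ, w θ = Real.sin θ^3 * (Q.derivative.derivative).eval (Real.cos θ) := by
    intro θ
    rw [hw]
    simp only
    rw [hg1 θ, hg2 θ]
    ring
  have hw_deriv : ∀ θ : ℝ, HasDerivAt w
      ((TP p bD (cD b) θ + TP p bB (cB b) θ) * Real.sin θ) θ := by
    intro θ
    have h1 := (hasDerivAt_TP p (bC b) cC θ).mul (Real.hasDerivAt_sin θ)
    have h2 := (hasDerivAt_TP p bB (cB b) θ).mul (Real.hasDerivAt_cos θ)
    have e1 : TP p (fun j => (j:ℝ) * cC j) (fun j => -((j:ℝ) * bC b j)) = TP p bD (cD b) := rfl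
    have e2 : TP p (fun j => (j:ℝ) * cB b j) (fun j => -((j:ℝ) * bB j)) = TP p (bC b) cC := rfl
    rw [e1] at h1
    rw [e2] at h2
    have := h1.sub h2
    exact this.congr_deriv (by ring)
  set φ : ℝ → ℝ := fun θ => TP p bD (cD b) θ + TP p bB (cB b) θ with hφ
  have hφ_deriv : ∀ θ : ℝ, HasDerivAt φ (TP p (bE b) cE θ + TP p (bC b) cC θ) θ := by
    intro θ
    exact (hasDerivAt_TP p bD (cD b) θ).add (hasDerivAt_TP p bB (cB b) θ)
  have hφ0 : φ 0 = 0 := by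
    rw [hφ]
    simp only
    rw [TP_at_zero p bD (cD b) bD_zero, TP_at_zero p bB (cB b) bB_zero]
    ring
  set P1 : ℝ := ((p:ℝ)^3 + p) * B with hP1
  set P2 : ℝ := ((p:ℝ)^4 + (p:ℝ)^2) * B with hP2
  have hφ_bd : ∀ θ : ℝ, |φ θ| ≤ P1 := by
    intro θ
    rw [hφ, hP1]
    calc |TP p bD (cD b) θ + TP p bB (cB b) θ|
        ≤ |TP p bD (cD b) θ| + |TP p bB (cB b) θ| := abs_add_le _ _
      _ ≤ p * (p * (p * B)) + p * B := add_le_add (bd3 θ) (bd1 θ)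
      _ = ((p:ℝ)^3 + p) * B := by ring
  have hφd_bd : ∀ θ : ℝ, |TP p (bE b) cE θ + TP p (bC b) cC θ| ≤ P2 := by
    intro θ
    rw [hP2]
    calc |TP p (bE b) cE θ + TP p (bC b) cC θ|
        ≤ |TP p (bE b) cE θ| + |TP p (bC b) cC θ| := abs_add_le _ _
      _ ≤ p * (p * (p * (p * B))) + p * (p * B) := add_le_add (bd4 θ) (bd2 θ)
      _ = ((p:ℝ)^4 + (p:ℝ)^2) * B := by ring
  have hP1_nonneg : 0 ≤ P1 := le_trans (abs_nonneg _) (hφ_bd 0)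
  have hP2_nonneg : 0 ≤ P2 := le_trans (abs_nonneg _) (hφd_bd 0)
  -- |φ t| ≤ P2 t for t ≥ 0
  have claimφ : ∀ t : ℝ, 0 ≤ t → |φ t| ≤ P2 * t := by
    intro t ht
    have := abs_le_of_deriv_le (f := φ) (g := fun s => P2 * s)
      (f' := fun s => TP p (bE b) cE s + TP p (bC b) cC s) (g' := fun _ => P2) ht
      hφ_deriv (fun s => by simpa using (hasDerivAt_id s).const_mul P2)
      (by rw [hφ0]; simp) (fun s _ => hφd_bd s)
    simpa using this
  have hw0 : w 0 = 0 := by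
    rw [hw]
    simp only
    rw [hg1 0]
    simp
  -- zone 1 : |w t| ≤ P2 t³/3 on [0, π]
  have claimW1 : ∀ t : ℝ, 0 ≤ t → t ≤ π → |w t| ≤ P2 * t^3 / 3 := by
    intro t ht htπ
    have := abs_le_of_deriv_le (f := w) (g := fun s => P2 * s^3 / 3)
      (f' := fun s => φ s * Real.sin s) (g' := fun s => P2 * s^2) ht
      (fun s => by
        have := hw_deriv s
        exact this)
      (fun s => by
        have h1 : HasDerivAt (fun u : ℝ => u^3) (3 * s^2) s := by
          simpa using hasDerivAt_pow 3 s
        have := h1.const_mul (P2/3)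
        exact (this.congr_deriv (by ring)).congr_of_eventuallyEq
          (Filter.Eventually.of_forall fun u => by beta_reduce; ring))
      (by rw [hw0]; simp)
      (fun s hs => by
        have h1 : |φ s * Real.sin s| = |φ s| * |Real.sin s| := abs_mul _ _
        rw [h1]
        have h2 : |Real.sin s| ≤ s := by
          have := Real.abs_sin_le_abs (x := s)
          rwa [abs_of_nonneg hs.1] at this
        calc |φ s| * |Real.sin s| ≤ (P2 * s) * s := by
              apply mul_le_mul (claimφ s hs.1) h2 (abs_nonneg _)
              exact mul_nonneg hP2_nonneg hs.1
          _ = P2 * s^2 := by ring)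
    exact this
  -- zone 2 : |w t| ≤ P2 (1/p)³/3 + P1 (cos(1/p) - cos t) for t ∈ [1/p, π]
  have claimW2 : ∀ t : ℝ, 1/(p:ℝ) ≤ t → t ≤ π →
      |w t| ≤ P2 * (1/(p:ℝ))^3 / 3 + P1 * (Real.cos (1/(p:ℝ)) - Real.cos t) := by
    intro t ht htπ
    have hip : (0:ℝ) < 1/(p:ℝ) := by positivity
    have hipπ : 1/(p:ℝ) ≤ π := le_trans ht htπ
    have := abs_le_of_deriv_le (f := w)
      (g := fun s => P2 * (1/(p:ℝ))^3 / 3 + P1 * (Real.cos (1/(p:ℝ)) - Real.cos s))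
      (f' := fun s => φ s * Real.sin s) (g' := fun s => P1 * Real.sin s) ht
      (fun s => hw_deriv s)
      (fun s => by
        have h1 : HasDerivAt (fun u : ℝ => Real.cos (1/(p:ℝ)) - Real.cos u) (Real.sin s) s := by
          have := (Real.hasDerivAt_cos s).const_sub (Real.cos (1/(p:ℝ)))
          simpa using this
        have := (h1.const_mul P1).const_add (P2 * (1/(p:ℝ))^3 / 3)
        convert this using 1)
      (by
        have := claimW1 (1/(p:ℝ)) (le_of_lt hip) hipπ
        simpa using this)
      (fun s hs => by
        have hsin_nonneg : 0 ≤ Real.sin s :=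
          Real.sin_nonneg_of_nonneg_of_le_pi (le_trans (le_of_lt hip) hs.1) (le_trans hs.2 htπ)
        rw [abs_mul]
        have h2 : |Real.sin s| = Real.sin s := abs_of_nonneg hsin_nonneg
        rw [h2]
        exact mul_le_mul_of_nonneg_right (hφ_bd s) hsin_nonneg)
    exact this
  -- now the pointwise bound
  intro x hx
  have hπ := Real.pi_gt_d6
  set θ := Real.arccos x with hθ
  have hθub : θ ≤ π/2 := Real.arccos_le_pi_div_two.mpr hx.1
  have hθpos : 0 < θ := Real.arccos_pos.mpr hx.2
  have hθπ : θ ≤ π := by linarith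
  have hcosθ : Real.cos θ = x := Real.cos_arccos (by linarith [hx.1]) (le_of_lt hx.2)
  have hsinθ : 0 < Real.sin θ := Real.sin_pos_of_pos_of_lt_pi hθpos (by linarith)
  have hw_x : w θ = Real.sin θ^3 * (Q.derivative.derivative).eval x := by
    rw [hw_eval θ, hcosθ]
  have habs : |(Q.derivative.derivative).eval x| = |w θ| / Real.sin θ^3 := by
    rw [hw_x, abs_mul, abs_of_pos (by positivity : (0:ℝ) < Real.sin θ^3)]
    field_simp
  rw [habs, div_le_iff₀ (by positivity : (0:ℝ) < Real.sin θ^3)]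
  rcases le_total θ (9/20) with hz1 | hz2
  · -- zone 1
    have h1 := claimW1 θ (le_of_lt hθpos) hθπ
    have hsub : θ - θ^3/4 < Real.sin θ := by have := Real.sin_gt_sub_cube hθpos; linarith [pow_pos hθpos 3]
    have hθsq : θ^2 ≤ 81/400 := by nlinarith
    have hθ3a : θ^3 ≤ (81/400)*θ := by nlinarith [mul_le_mul_of_nonneg_right hθsq (le_of_lt hθpos)]
    have hs2 : (1519/1600) * θ ≤ Real.sin θ := by nlinarith
    have hs3 : ((1519/1600) * θ)^3 ≤ Real.sin θ^3 :=
      pow_le_pow_left₀ (by positivity) hs2 3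
    have hpp : 9 * (p:ℝ)^2 ≤ (p:ℝ)^4 := by
      have h3 : (3:ℝ) ≤ p := by exact_mod_cast hp
      have h9 : (9:ℝ) ≤ (p:ℝ)^2 := by nlinarith [h3]
      nlinarith [mul_le_mul_of_nonneg_right h9 (sq_nonneg (p:ℝ))]
    have hθ3 : (0:ℝ) ≤ θ^3 := by positivity
    have hs3' : ((1519:ℝ)/1600)^3 * θ^3 ≤ Real.sin θ^3 := by rw [← mul_pow]; exact hs3
    have hco : ((p:ℝ)^4+(p:ℝ)^2)/3 ≤ (p:ℝ)^4/2*((1519:ℝ)/1600)^3 := by nlinarith [hpp]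
    have hBθ : (0:ℝ) ≤ B*θ^3 := mul_nonneg hB0 hθ3
    calc |w θ| ≤ P2 * θ^3/3 := h1
      _ = (((p:ℝ)^4+(p:ℝ)^2)/3) * (B*θ^3) := by rw [hP2]; ring
      _ ≤ ((p:ℝ)^4/2*((1519:ℝ)/1600)^3) * (B*θ^3) := mul_le_mul_of_nonneg_right hco hBθ
      _ = ((p:ℝ)^4*B/2) * (((1519:ℝ)/1600)^3*θ^3) := by ring
      _ ≤ (p:ℝ)^4*B/2 * Real.sin θ^3 :=
          mul_le_mul_of_nonneg_left hs3' (by positivity)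
  · -- zone 2
    have hips : 1/(p:ℝ) ≤ 9/20 := by
      rw [div_le_div_iff₀ hppos (by norm_num)]
      have : (3:ℝ) ≤ p := by exact_mod_cast hp
      linarith
    have h1 := claimW2 θ (le_trans hips hz2) hθπ
    have hkey : P2 * (1/(p:ℝ))^3/3 = P1 * (1/(3*(p:ℝ)^2)) := by
      rw [hP1, hP2]
      field_simp
    rw [hkey] at h1
    have main : P1 * (1/(3*(p:ℝ)^2)) + P1 * (Real.cos (1/(p:ℝ)) - Real.cos θ)
        ≤ (p:ℝ)^4 * B / 2 * Real.sin θ^3 := by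
      rcases Nat.eq_or_lt_of_le hp with hp3 | hp4
      · -- p = 3
        have hp3' : (p:ℝ) = 3 := by exact_mod_cast hp3.symm
        rw [hP1, hp3']
        have hz := zone2_p3 (θ := θ) hz2 hθub
        have h30B : (0:ℝ) ≤ 30*B := by linarith
        have hz' := mul_le_mul_of_nonneg_left hz h30B
        norm_num
        norm_num at hz'
        linarith [hz']
      · -- p ≥ 4
        have hp4' : (4:ℝ) ≤ p := by exact_mod_cast hp4
        have hz := zone2_p4 (θ := θ) hz2 hθub
        have hcos1p : Real.cos (1/(p:ℝ)) ≤ 1 := Real.cos_le_one _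
        have hip2 : 1/(3*(p:ℝ)^2) ≤ 1/48 := by
          rw [div_le_div_iff₀ (by positivity) (by norm_num)]
          nlinarith
        have hP1ub : P1 ≤ (17/16) * (p:ℝ)^3 * B := by
          rw [hP1]
          nlinarith [hB0, hp4']
        have hcosθ1 : Real.cos θ ≤ 1 := Real.cos_le_one _
        have hnn : (0:ℝ) ≤ 49/48 - Real.cos θ := by linarith
        have hcθub : Real.cos θ ≤ 1 - (9/20:ℝ)^2/2 + (9/20:ℝ)^4*(5/96) := by
          have hm : Real.cos θ ≤ Real.cos (9/20) :=
            Real.cos_le_cos_of_nonneg_of_le_pi (by norm_num) hθπ hz2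
          have := cos_num_ub (x := 9/20) (by norm_num) (by norm_num)
          linarith
        have hc1p : 1 - (1/(p:ℝ))^2/2 ≤ Real.cos (1/(p:ℝ)) := cos_quad_lb _
        have hp14 : (1/(p:ℝ)) ≤ 1/4 := by
          rw [div_le_div_iff₀ hppos (by norm_num)]
          linarith
        have hp14sq : (1/(p:ℝ))^2 ≤ (1/4:ℝ)^2 := pow_le_pow_left₀ (by positivity) hp14 2
        have hnn2 : (0:ℝ) ≤ 1/(3*(p:ℝ)^2) + Real.cos (1/(p:ℝ)) - Real.cos θ := by
          have : (0:ℝ) ≤ 1/(3*(p:ℝ)^2) := by positivity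
          nlinarith [hc1p, hcθub, hp14sq]
        calc P1 * (1/(3*(p:ℝ)^2)) + P1 * (Real.cos (1/(p:ℝ)) - Real.cos θ)
            = P1 * (1/(3*(p:ℝ)^2) + Real.cos (1/(p:ℝ)) - Real.cos θ) := by ring
          _ ≤ (17/16) * (p:ℝ)^3 * B * (49/48 - Real.cos θ) := by
              apply mul_le_mul hP1ub (by linarith) hnn2 (by positivity)
          _ ≤ (p:ℝ)^3 * B * (2 * Real.sin θ^3) := by
              have h2 : (17/16) * (49/48 - Real.cos θ) ≤ 2 * Real.sin θ^3 := hz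
              have h3 : (0:ℝ) ≤ (p:ℝ)^3 * B := by positivity
              nlinarith [mul_le_mul_of_nonneg_left h2 h3]
          _ ≤ (p:ℝ)^4 * B / 2 * Real.sin θ^3 := by
              have hBs : (0:ℝ) ≤ B * Real.sin θ^3 := mul_nonneg hB0 (by positivity)
              have h4 : 2*(p:ℝ)^3 ≤ (p:ℝ)^4/2 := by
                nlinarith [mul_nonneg (le_of_lt (pow_pos hppos 3))
                  (by linarith : (0:ℝ) ≤ (p:ℝ) - 4)]
              nlinarith [mul_le_mul_of_nonneg_right h4 hBs]
    linarith [h1, main]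


lemma markov2_right (Q : ℝ[X]) (p : ℕ) (hp : 3 ≤ p) (hdeg : Q.natDegree ≤ p) (B : ℝ)
    (hB : ∀ x ∈ Icc (-1:ℝ) 1, |Q.eval x| ≤ B) :
    ∀ x ∈ Icc (0:ℝ) 1, |(Q.derivative.derivative).eval x| ≤ (p:ℝ)^4 * B / 2 := by
  intro x hx
  have hIco : Ico (0:ℝ) 1 ⊆ {y : ℝ | |(Q.derivative.derivative).eval y| ≤ (p:ℝ)^4 * B / 2} :=
    fun y hy => markov2_half Q p hp hdeg B hB y hy
  have hcl : IsClosed {y : ℝ | |(Q.derivative.derivative).eval y| ≤ (p:ℝ)^4 * B / 2} :=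
    isClosed_le ((Q.derivative.derivative).continuous.abs) continuous_const
  have hsub : Icc (0:ℝ) 1 ⊆ closure (Ico (0:ℝ) 1) := by
    rw [closure_Ico (by norm_num : (0:ℝ) ≠ 1)]
  exact closure_minimal hIco hcl (hsub hx)

lemma markov2_ge3 (Q : ℝ[X]) (p : ℕ) (hp : 3 ≤ p) (hdeg : Q.natDegree ≤ p) (B : ℝ)
    (hB : ∀ x ∈ Icc (-1:ℝ) 1, |Q.eval x| ≤ B) :
    ∀ x ∈ Icc (-1:ℝ) 1, |(Q.derivative.derivative).eval x| ≤ (p:ℝ)^4 * B / 2 := by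
  intro x hx
  rcases le_total 0 x with hx0 | hx0
  · exact markov2_right Q p hp hdeg B hB x ⟨hx0, hx.2⟩
  · set R : ℝ[X] := Q.comp (-X) with hR
    have hd1 : (-X : ℝ[X]).derivative = -1 := by simp
    have hRdeg : R.natDegree ≤ p := by
      rw [hR, natDegree_comp]
      simp only [natDegree_neg, natDegree_X, mul_one]
      exact hdeg
    have hRB : ∀ y ∈ Icc (-1:ℝ) 1, |R.eval y| ≤ B := by
      intro y hy
      rw [hR, eval_comp]
      simp only [eval_neg, eval_X]
      exact hB (-y) ⟨by linarith [hy.2], by linarith [hy.1]⟩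
    have hR1 : R.derivative = -(Q.derivative.comp (-X)) := by
      rw [hR, derivative_comp, hd1]
      ring
    have hR2 : R.derivative.derivative = (Q.derivative.derivative).comp (-X) := by
      rw [hR1, derivative_neg, derivative_comp, hd1]
      ring
    have hval : (R.derivative.derivative).eval (-x) = (Q.derivative.derivative).eval x := by
      rw [hR2, eval_comp]
      simp
    have := markov2_right R p hp hRdeg B hRB (-x) ⟨by linarith, by linarith [hx.1]⟩
    rw [hval] at this
    exact this

lemma markov2_two (Q : ℝ[X]) (hdeg : Q.natDegree ≤ 2) (B : ℝ)
    (hB : ∀ x ∈ Icc (-1:ℝ) 1, |Q.eval x| ≤ B) :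
    ∀ x ∈ Icc (-1:ℝ) 1, |(Q.derivative.derivative).eval x| ≤ 8 * B := by
  have hd : Q.derivative.natDegree ≤ 1 := by
    have := Polynomial.natDegree_derivative_le Q
    omega
  have h2 : Q.derivative.derivative = C (Q.derivative.coeff 1) := by
    have he := Polynomial.eq_X_add_C_of_natDegree_le_one hd
    rw [he]
    simp
  have hc : Q.derivative.coeff 1 = Q.coeff 2 * 2 := by
    rw [Polynomial.coeff_derivative]
    norm_num
  have heval : ∀ x : ℝ, Q.eval x = Q.coeff 0 + Q.coeff 1 * x + Q.coeff 2 * x^2 := by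
    intro x
    rw [Polynomial.eval_eq_sum_range' (show Q.natDegree < 3 by omega)]
    rw [Finset.sum_range_succ, Finset.sum_range_succ, Finset.sum_range_succ]
    simp only [Finset.sum_range_zero, zero_add, pow_zero, mul_one, pow_one]
  have hcoeff2 : Q.coeff 2 * 2 = Q.eval 1 + Q.eval (-1) - 2 * Q.eval 0 := by
    rw [heval 1, heval (-1), heval 0]
    ring
  intro x _
  rw [h2, hc]
  simp only [eval_C]
  rw [hcoeff2]
  have h1 := hB 1 (by norm_num)
  have hm1 := hB (-1) (by norm_num)
  have h0 := hB 0 (by norm_num)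
  have := abs_le.mp h1
  have := abs_le.mp hm1
  have := abs_le.mp h0
  rw [abs_le]
  constructor <;> nlinarith [abs_le.mp h1, abs_le.mp hm1, abs_le.mp h0]

/-- Markov-type bound for the second derivative on [-1,1], p ≥ 2. -/
lemma markov2_unit (Q : ℝ[X]) (p : ℕ) (hp : 2 ≤ p) (hdeg : Q.natDegree ≤ p) (B : ℝ)
    (hB : ∀ x ∈ Icc (-1:ℝ) 1, |Q.eval x| ≤ B) :
    ∀ x ∈ Icc (-1:ℝ) 1, |(Q.derivative.derivative).eval x| ≤ (p:ℝ)^4 * B / 2 := by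
  have hB0 : 0 ≤ B := le_trans (abs_nonneg _) (hB 0 (by norm_num))
  rcases Nat.eq_or_lt_of_le hp with hp2 | hp3
  · intro x hx
    have := markov2_two Q (by omega) B hB x hx
    have hp2' : (p:ℝ) = 2 := by exact_mod_cast hp2.symm
    rw [hp2']
    norm_num
    linarith
  · exact markov2_ge3 Q p (by omega) hdeg B hB

/-- Markov bound on a general interval. -/
lemma markov2_scaled (Q : ℝ[X]) (p : ℕ) (hp : 2 ≤ p) (hdeg : Q.natDegree ≤ p)
    (u v : ℝ) (huv : u < v) (B : ℝ) (hB : ∀ t ∈ Icc u v, |Q.eval t| ≤ B) :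
    ∀ t ∈ Icc u v, |(Q.derivative.derivative).eval t| ≤ 2*(p:ℝ)^4 * B / (v-u)^2 := by
  set L : ℝ := (v-u)/2 with hL
  set m : ℝ := (u+v)/2 with hm
  have hL0 : 0 < L := by rw [hL]; linarith
  set q : ℝ[X] := C m + C L * X with hq
  have hqdeg : q.natDegree = 1 := by
    rw [hq, add_comm]
    exact Polynomial.natDegree_linear (by positivity)
  have hqeval : ∀ s : ℝ, q.eval s = m + L * s := by
    intro s; rw [hq]; simp
  set E : ℝ[X] := Q.comp q with hE
  have hEdeg : E.natDegree ≤ p := by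
    rw [hE, natDegree_comp, hqdeg, mul_one]
    exact hdeg
  have hmem : ∀ s : ℝ, s ∈ Icc (-1:ℝ) 1 → m + L * s ∈ Icc u v := by
    intro s hs
    constructor
    · nlinarith [hs.1, hs.2]
    · nlinarith [hs.1, hs.2]
  have hEB : ∀ s ∈ Icc (-1:ℝ) 1, |E.eval s| ≤ B := by
    intro s hs
    rw [hE, eval_comp, hqeval]
    exact hB _ (hmem s hs)
  have hq' : q.derivative = C L := by rw [hq]; simp
  have hE2 : E.derivative.derivative = C (L^2) * (Q.derivative.derivative).comp q := by
    rw [hE, derivative_comp, hq', derivative_mul, derivative_C, derivative_comp, hq']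
    simp only [zero_mul, zero_add]
    rw [← mul_assoc, ← C_mul]
    ring_nf
  intro t ht
  set s : ℝ := (t - m) / L with hs
  have hsmem : s ∈ Icc (-1:ℝ) 1 := by
    constructor
    · rw [hs, le_div_iff₀ hL0]
      have := ht.1
      rw [hm, hL]
      linarith
    · rw [hs, div_le_iff₀ hL0]
      have := ht.2
      rw [hm, hL]
      linarith
  have hts : m + L * s = t := by
    rw [hs]
    field_simp
    ring
  have hEs := markov2_unit E p hp hEdeg B hEB s hsmem
  rw [hE2] at hEs
  simp only [eval_mul, eval_C, eval_comp] at hEs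
  rw [hqeval, hts] at hEs
  rw [abs_mul, abs_of_pos (by positivity : (0:ℝ) < L^2)] at hEs
  have hv : (v - u)^2 = 4 * L^2 := by rw [hL]; field_simp; ring
  rw [hv, le_div_iff₀ (by positivity : (0:ℝ) < 4*L^2)]
  nlinarith [hEs]

end Stmt11Aux


set_option maxHeartbeats 800000 in
open Stmt11Aux in
/-- Near a maximal critical point of the discriminant in a gap, Taylor's formula
and Markov's inequality give a lower bound on the distance from the critical
point to the gap edge: `μ⁺ − ν ≥ (|L|/p²) √((M−1)/M)`. -/
theorem stmt11 (D : Polynomial ℝ) (p : ℕ) (hp : 1 ≤ p) (hdeg : D.natDegree = p)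
    (u v : ℝ) (huv : u < v)
    (M : ℝ) (hM : 1 < M)
    (hsup : ∀ t ∈ Icc u v, |D.eval t| ≤ 2 * M)
    (μm μp ν : ℝ) (hsub : Ioo μm μp ⊆ Icc u v) (hν : ν ∈ Ioo μm μp)
    (hμp : μp ∈ Icc u v)
    (hcrit : D.derivative.eval ν = 0)
    (hval : |D.eval ν| = 2 * M) (hedge : |D.eval μp| = 2)
    (hsign : 0 < D.eval ν * D.eval μp)
    (N : ℝ)
    (hN : N = sSup ((fun t => |(D.derivative.derivative).eval t|) '' Icc u v)) :
    (μp - ν) ^ 2 ≥ 4 * (M - 1) / N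
    ∧ 4 * (M - 1) / N ≥ (v - u) ^ 2 / (p : ℝ) ^ 4 * ((M - 1) / M)
    ∧ μp - ν ≥ (v - u) / (p : ℝ) ^ 2 * Real.sqrt ((M - 1) / M) := by
  have hℓ : (0:ℝ) < v - u := by linarith
  have hM1 : (0:ℝ) < M - 1 := by linarith
  have hν_mem : ν ∈ Icc u v := hsub hν
  have hνμ : ν < μp := hν.2
  have hνμpos : (0:ℝ) < μp - ν := by linarith
  have hνμ2 : (0:ℝ) < (μp - ν)^2 := by positivity
  -- p ≥ 2
  have hp2 : 2 ≤ p := by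
    by_contra h
    have hp1 : p = 1 := by omega
    have hd : D.natDegree ≤ 1 := by rw [hdeg, hp1]
    have he := Polynomial.eq_X_add_C_of_natDegree_le_one hd
    have hder : D.derivative = C (D.coeff 1) := by
      conv_lhs => rw [he]
      simp
    have hzero : D.coeff 1 = 0 := by
      have h0 := hcrit
      rw [hder] at h0
      simpa using h0
    have hD0 : D ≠ 0 := by
      intro hDz
      rw [hDz] at hdeg
      simp at hdeg
      omega
    have hne : D.coeff 1 ≠ 0 := by
      have h1 : D.natDegree = 1 := by rw [hdeg, hp1]
      have h2 : D.leadingCoeff ≠ 0 := Polynomial.leadingCoeff_ne_zero.mpr hD0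
      rwa [Polynomial.leadingCoeff, h1] at h2
    exact hne hzero
  -- Taylor with Lagrange remainder via Rolle
  set K : ℝ := 2*(D.eval μp - D.eval ν)/(μp - ν)^2 with hK
  set F : ℝ → ℝ := fun t => D.eval μp - D.eval t - D.derivative.eval t * (μp - t)
    - K*(μp - t)^2/2 with hF
  have hF_deriv : ∀ t : ℝ, HasDerivAt F ((μp - t) * (K - (D.derivative.derivative).eval t)) t := by
    intro t
    have hid : HasDerivAt (fun x : ℝ => μp - x) (-1) t := by
      simpa using (hasDerivAt_id t).const_sub μp
    have h1 : HasDerivAt (fun x : ℝ => D.eval x) (D.derivative.eval t) t := D.hasDerivAt t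
    have h2 : HasDerivAt (fun x : ℝ => D.derivative.eval x * (μp - x))
        ((D.derivative.derivative).eval t * (μp - t) + D.derivative.eval t * (-1)) t :=
      (D.derivative.hasDerivAt t).mul hid
    have h3 : HasDerivAt (fun x : ℝ => K*(μp - x)^2/2) (K*(2*(μp - t)*(-1))/2) t := by
      have hsq : HasDerivAt (fun x : ℝ => (μp - x)^2) (2*(μp - t)^1*(-1)) t := by
        simpa using hid.fun_pow 2
      have := (hsq.const_mul (K/2))
      exact (this.congr_deriv (by ring)).congr_of_eventuallyEq
        (Filter.Eventually.of_forall fun x => by beta_reduce; ring)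
    have hsum := ((h1.const_sub (D.eval μp)).sub h2).sub h3
    have : F = fun x => D.eval μp - D.eval x - D.derivative.eval x * (μp - x) - K*(μp - x)^2/2 := hF
    rw [this]
    exact hsum.congr_deriv (by ring)
  have hFν : F ν = 0 := by
    rw [hF]
    simp only
    rw [hcrit, hK]
    field_simp
    ring
  have hFμ : F μp = 0 := by
    rw [hF]
    simp only
    ring_nf
  obtain ⟨ξ, hξmem, hξ⟩ := exists_hasDerivAt_eq_zero hνμ
    (fun t _ => (hF_deriv t).continuousAt.continuousWithinAt)
    (by rw [hFν, hFμ]) (fun x _ => hF_deriv x)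
  have hKval : K = (D.derivative.derivative).eval ξ := by
    have hne : μp - ξ ≠ 0 := by
      have := hξmem.2; intro h; linarith [this]
    rcases mul_eq_zero.mp hξ with h | h
    · exact absurd h hne
    · linarith [h]
  -- the value gap
  have hDν_ne : D.eval ν ≠ 0 := by
    intro h
    rw [h] at hval
    simp at hval
    linarith
  have hgap : |D.eval μp - D.eval ν| = 2*M - 2 := by
    rcases lt_or_gt_of_ne hDν_ne with hneg | hpos
    · have hνval : D.eval ν = -(2*M) := by
        have := abs_of_neg hneg
        linarith [hval, this]
      have hμneg : D.eval μp < 0 := by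
        rcases lt_or_ge (D.eval μp) 0 with h | h
        · exact h
        · exfalso; nlinarith [hsign]
      have hμval : D.eval μp = -2 := by
        have := abs_of_neg hμneg
        linarith [hedge, this]
      rw [hνval, hμval]
      rw [abs_of_pos (by linarith)]
      ring
    · have hνval : D.eval ν = 2*M := by
        have := abs_of_pos hpos
        linarith [hval, this]
      have hμpos : 0 < D.eval μp := by
        rcases lt_or_ge 0 (D.eval μp) with h | h
        · exact h
        · exfalso; nlinarith [hsign]
      have hμval : D.eval μp = 2 := by
        have := abs_of_pos hμpos
        linarith [hedge, this]
      rw [hνval, hμval]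
      rw [abs_of_neg (by linarith)]
      ring
  have hξuv : ξ ∈ Icc u v :=
    ⟨le_trans hν_mem.1 (le_of_lt hξmem.1), le_trans (le_of_lt hξmem.2) hμp.2⟩
  -- key equation
  have hDval : D.eval μp - D.eval ν = K * (μp - ν)^2/2 := by
    rw [hK]
    field_simp
  have heq : 2*M - 2 = |(D.derivative.derivative).eval ξ| * (μp - ν)^2 / 2 := by
    rw [← hgap, hDval, hKval]
    rw [abs_div, abs_mul, abs_of_pos hνμ2]
    simp [abs_div]
  set A : ℝ := |(D.derivative.derivative).eval ξ| with hA
  have hApos : 0 < A := by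
    rcases eq_or_lt_of_le (abs_nonneg ((D.derivative.derivative).eval ξ)) with h | h
    · exfalso
      rw [hA] at heq
      rw [← h] at heq
      simp at heq
      linarith
    · exact h
  -- N bounds
  have hcont : Continuous (fun t : ℝ => |(D.derivative.derivative).eval t|) :=
    (D.derivative.derivative).continuous.abs
  have hbdd : BddAbove ((fun t => |(D.derivative.derivative).eval t|) '' Icc u v) :=
    (isCompact_Icc.image_of_continuousOn hcont.continuousOn).bddAbove
  have hNge : A ≤ N := by
    rw [hN]
    exact le_csSup hbdd ⟨ξ, hξuv, rfl⟩
  have hNpos : 0 < N := lt_of_lt_of_le hApos hNge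
  have hsq : (μp - ν)^2 = 4*(M - 1)/A := by
    rw [eq_div_iff (ne_of_gt hApos)]
    nlinarith [heq]
  -- PART 1
  have part1 : (μp - ν)^2 ≥ 4*(M - 1)/N := by
    rw [hsq]
    apply div_le_div_of_nonneg_left (by linarith) hApos hNge
  -- PART 2
  have hC : N ≤ 2*(p:ℝ)^4 * (2*M) / (v - u)^2 := by
    rw [hN]
    apply csSup_le
    · exact ⟨_, ⟨u, ⟨le_refl u, le_of_lt huv⟩, rfl⟩⟩
    · rintro y ⟨t, ht, rfl⟩
      exact markov2_scaled D p hp2 (le_of_eq hdeg) u v huv (2*M) hsup t ht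
  have hppos : (0:ℝ) < p := by
    have : (0:ℕ) < p := by omega
    exact_mod_cast this
  have part2 : 4*(M - 1)/N ≥ (v - u)^2/(p:ℝ)^4 * ((M - 1)/M) := by
    have h1 : 4*(M - 1)/N ≥ 4*(M - 1)/(2*(p:ℝ)^4 * (2*M) / (v - u)^2) :=
      div_le_div_of_nonneg_left (by linarith) hNpos hC
    have h2 : 4*(M - 1)/(2*(p:ℝ)^4 * (2*M) / (v - u)^2) = (v - u)^2/(p:ℝ)^4 * ((M - 1)/M) := by
      field_simp
      ring
    rw [h2] at h1
    exact h1
  -- PART 3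
  have part3 : μp - ν ≥ (v - u)/(p:ℝ)^2 * Real.sqrt ((M - 1)/M) := by
    have hsq3 : (μp - ν)^2 ≥ ((v - u)/(p:ℝ)^2 * Real.sqrt ((M - 1)/M))^2 := by
      have he : ((v - u)/(p:ℝ)^2 * Real.sqrt ((M - 1)/M))^2
          = (v - u)^2/(p:ℝ)^4 * ((M - 1)/M) := by
        rw [mul_pow, Real.sq_sqrt (by positivity : (0:ℝ) ≤ (M - 1)/M)]
        ring
      rw [he]
      linarith [part1, part2]
    have hrhs_nonneg : (0:ℝ) ≤ (v - u)/(p:ℝ)^2 * Real.sqrt ((M - 1)/M) := by positivity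
    have hlhs_pos : (0:ℝ) < μp - ν := by linarith
    nlinarith [hsq3, hrhs_nonneg, hlhs_pos]
  exact ⟨part1, part2, part3⟩
end

section
/- Let a₁, a₂, a₃, a₄ > 0, α := a₁²+a₂²+a₃²+a₄², and suppose |a₁ − a₃| ≤ 2g, |a₂ − a₄| ≤ 2g, and |a₁a₃ − a₂a₄|/√α ≤ h/2 for some g, h ≥ 0, with a₁ + a₂ ≥ a₃ + a₄. Then |a₁ − a₂| ≤ h + 8g. -/
/-- If `|a₁ − a₃| ≤ 2g`, `|a₂ − a₄| ≤ 2g`, `|a₁a₃ − a₂a₄|/√α ≤ h/2` and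
`a₁ + a₂ ≥ a₃ + a₄`, then `|a₁ − a₂| ≤ h + 8g`. -/
theorem stmt15 (a₁ a₂ a₃ a₄ g h : ℝ)
    (h₁ : 0 < a₁) (h₂ : 0 < a₂) (h₃ : 0 < a₃) (h₄ : 0 < a₄)
    (hg : 0 ≤ g) (hh : 0 ≤ h)
    (h13 : |a₁ - a₃| ≤ 2 * g) (h24 : |a₂ - a₄| ≤ 2 * g)
    (hprod : |a₁ * a₃ - a₂ * a₄| / Real.sqrt (a₁ ^ 2 + a₂ ^ 2 + a₃ ^ 2 + a₄ ^ 2) ≤ h / 2)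
    (hord : a₃ + a₄ ≤ a₁ + a₂) :
    |a₁ - a₂| ≤ h + 8 * g := by
  set α := a₁ ^ 2 + a₂ ^ 2 + a₃ ^ 2 + a₄ ^ 2 with hαdef
  have hαpos : 0 < α := by positivity
  set s := Real.sqrt α with hsdef
  have hspos : 0 < s := Real.sqrt_pos.mpr hαpos
  have hprod' : |a₁ * a₃ - a₂ * a₄| ≤ h / 2 * s := by
    rw [div_le_iff₀ hspos] at hprod
    exact hprod
  have hs2 : s ≤ 2 * (a₁ + a₂) := by
    have h1 : α ≤ (2 * (a₁ + a₂)) ^ 2 := by nlinarith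
    calc s ≤ Real.sqrt ((2 * (a₁ + a₂)) ^ 2) := Real.sqrt_le_sqrt h1
    _ = 2 * (a₁ + a₂) := Real.sqrt_sq (by positivity)
  obtain ⟨p1, p2⟩ := abs_le.mp h13
  obtain ⟨q1, q2⟩ := abs_le.mp h24
  obtain ⟨r1, r2⟩ := abs_le.mp hprod'
  rw [abs_le]
  constructor <;> nlinarith [mul_pos h₁ h₂, mul_pos (add_pos h₁ h₂) hspos]
end
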